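/- arXiv:1105.5291 — 2 statements merged into one kernel-verified Lean document; each statement's English description precedes it below -/
import Mathlib

section
/- For every n ∈ ℕ, every polyomino with n unit squares that minimizes T among all polyominoes with n unit squares is a connected monotone polyomino whose perimeter is minimal among polyominoes with n unit squares; moreover, the standard polyominoes with n unit squares are among the minimizers of T. -/
/- Common framework: two-type Kawasaki dynamics on a finite box in ℤ². -/

abbrev Site := ℤ × ℤ
abbrev Cell := ℤ × ℤ

/-- Nearest-neighbour adjacency on ℤ². -/
def adjacent (x y : Site) : Prop := |x.1 - y.1| + |x.2 - y.2| = 1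

instance (x y : Site) : Decidable (adjacent x y) :=
  inferInstanceAs (Decidable (|x.1 - y.1| + |x.2 - y.2| = 1))

/-- The four nearest neighbours of a site. -/
def nbrs (x : Site) : Finset Site :=
  {(x.1 + 1, x.2), (x.1 - 1, x.2), (x.1, x.2 + 1), (x.1, x.2 - 1)}

/-- Internal boundary ∂⁻Λ of a finite set Λ ⊂ ℤ². -/
def intBdry (Λ : Finset Site) : Finset Site := Λ.filter (fun x => ¬ nbrs x ⊆ Λ)

/-- Λ⁻ = Λ ∖ ∂⁻Λ. -/
def inner1 (Λ : Finset Site) : Finset Site := Λ \ intBdry Λ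

/-- Λ⁻⁻ = Λ⁻ ∖ ∂⁻Λ⁻. -/
def inner2 (Λ : Finset Site) : Finset Site := inner1 Λ \ intBdry (inner1 Λ)

/-- A configuration on Λ: each site of Λ carries 0 (empty), 1 (type 1) or 2 (type 2);
sites outside Λ are empty. -/
structure Config (Λ : Finset Site) where
  val : Site → Fin 3
  zero_outside : ∀ x, x ∉ Λ → val x = 0

/-- Number of particles of type 1. -/
def numType1 {Λ : Finset Site} (η : Config Λ) : ℕ := (Λ.filter (fun x => η.val x = 1)).card

/-- Number of particles of type 2. -/
def numType2 {Λ : Finset Site} (η : Config Λ) : ℕ := (Λ.filter (fun x => η.val x = 2)).card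

/-- Number of active bonds: unordered n.n. pairs of sites of Λ⁻, one carrying a 1 and the
other a 2 (each such unordered pair is counted once, as the ordered pair (type1,type2)). -/
def numBonds {Λ : Finset Site} (η : Config Λ) : ℕ :=
  ((inner1 Λ ×ˢ inner1 Λ).filter
    (fun p => adjacent p.1 p.2 ∧ η.val p.1 = 1 ∧ η.val p.2 = 2)).card

/-- The Hamiltonian H(η) = −U·B(η) + Δ1·n1(η) + Δ2·n2(η). -/
noncomputable def energy (U Δ1 Δ2 : ℝ) {Λ : Finset Site} (η : Config Λ) : ℝ :=
  -U * numBonds η + Δ1 * numType1 η + Δ2 * numType2 η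

/-- Allowed moves of the Kawasaki dynamics: hopping inside Λ, creation and annihilation
at the internal boundary. -/
def Communicates {Λ : Finset Site} (η η' : Config Λ) : Prop :=
  (∃ x ∈ Λ, ∃ y ∈ Λ, adjacent x y ∧ η.val x = 0 ∧ η.val y ≠ 0 ∧
      η'.val = Function.update (Function.update η.val x (η.val y)) y 0) ∨
  (∃ x ∈ intBdry Λ, ∃ v : Fin 3, v ≠ 0 ∧ η.val x = 0 ∧
      η'.val = Function.update η.val x v) ∨
  (∃ x ∈ intBdry Λ, η.val x ≠ 0 ∧ η'.val = Function.update η.val x 0)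

/-- ω is a path of allowed moves from η to η′. -/
def IsPath {Λ : Finset Site} (ω : List (Config Λ)) (η η' : Config Λ) : Prop :=
  ω.head? = some η ∧ ω.getLast? = some η' ∧ ω.Chain' Communicates

/-- Communication height between two sets of configurations:
Φ(A,B) = min over paths from A to B of the maximal energy along the path. -/
noncomputable def commHeightSet (U Δ1 Δ2 : ℝ) {Λ : Finset Site}
    (A B : Set (Config Λ)) : ℝ :=
  sInf {m : ℝ | ∃ η ∈ A, ∃ η' ∈ B, ∃ ω : List (Config Λ),
    IsPath ω η η' ∧ ∀ ξ ∈ ω, energy U Δ1 Δ2 ξ ≤ m}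

/-- Communication height Φ(η,η′). -/
noncomputable def commHeight (U Δ1 Δ2 : ℝ) {Λ : Finset Site} (η η' : Config Λ) : ℝ :=
  commHeightSet U Δ1 Δ2 {η} {η'}

/-- Stability level V_η = Φ(η, I_η) − H(η), where I_η = {ξ : H(ξ) < H(η)}. -/
noncomputable def stabLevel (U Δ1 Δ2 : ℝ) {Λ : Finset Site} (η : Config Λ) : ℝ :=
  commHeightSet U Δ1 Δ2 {η} {ξ : Config Λ | energy U Δ1 Δ2 ξ < energy U Δ1 Δ2 η}
    - energy U Δ1 Δ2 η

/-- The set of stable configurations (global minimizers of H). -/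
def Xstab (U Δ1 Δ2 : ℝ) (Λ : Finset Site) : Set (Config Λ) :=
  {η | ∀ ξ : Config Λ, energy U Δ1 Δ2 η ≤ energy U Δ1 Δ2 ξ}

/-- The set of metastable configurations (non-stable configurations of maximal
stability level). -/
def Xmeta (U Δ1 Δ2 : ℝ) (Λ : Finset Site) : Set (Config Λ) :=
  {η | η ∉ Xstab U Δ1 Δ2 Λ ∧
    ∀ ξ : Config Λ, ξ ∉ Xstab U Δ1 Δ2 Λ → stabLevel U Δ1 Δ2 ξ ≤ stabLevel U Δ1 Δ2 η}

/-- The empty configuration □. -/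
def emptyConfig (Λ : Finset Site) : Config Λ := ⟨fun _ => 0, fun _ _ => rfl⟩

/-- The critical length ℓ* = ⌈Δ1/(4U − Δ1 − Δ2)⌉. -/
noncomputable def lstar (U Δ1 Δ2 : ℝ) : ℤ := ⌈Δ1 / (4 * U - Δ1 - Δ2)⌉

/-- The box Λ: in dual coordinates u(x) = ((x1−x2)/2,(x1+x2)/2) the
(L+3/2)×(L+3/2) square centered at the origin, i.e. |x1−x2| ≤ L+1 and |x1+x2| ≤ L+1. -/
noncomputable def latBox (L : ℕ) : Finset Site :=
  (Finset.Icc (-(L : ℤ) - 1) ((L : ℤ) + 1) ×ˢ Finset.Icc (-(L : ℤ) - 1) ((L : ℤ) + 1)).filter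
    (fun x => |x.1 - x.2| ≤ (L : ℤ) + 1 ∧ |x.1 + x.2| ≤ (L : ℤ) + 1)

/-- The m×n dual rectangle of sites (in dual coordinates) with dual lower-left corner p
(in standard coordinates): sites p + i·(1,−1) + j·(1,1) for 0 ≤ i < m, 0 ≤ j < n.
All these sites have the same parity. -/
def dualRect (p : Site) (m n : ℕ) : Finset Site :=
  (Finset.range m ×ˢ Finset.range n).image
    (fun ij => ((p.1 + (ij.1 : ℤ) + (ij.2 : ℤ), p.2 + (ij.2 : ℤ) - (ij.1 : ℤ)) : Site))

/-- The sites adjacent to a set S but not in S. -/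
def siteBorder (S : Finset Site) : Finset Site := S.biUnion nbrs \ S

/-- ⊞: the tb-tiled configurations whose particles of type 2 occupy an L×L square in dual
coordinates filling Λ⁻ (type-2 sites in Λ⁻⁻, surrounding type-1 sites in Λ⁻); these are
the two largest checkerboard droplets (one of each parity). -/
def boxPlus (L : ℕ) : Set (Config (latBox L)) :=
  {η | ∃ p : Site,
      (∀ x, η.val x = 2 ↔ x ∈ dualRect p L L) ∧
      (∀ x, η.val x = 1 ↔ x ∈ siteBorder (dualRect p L L)) ∧
      dualRect p L L ⊆ inner2 (latBox L) ∧
      siteBorder (dualRect p L L) ⊆ inner1 (latBox L)}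

/-- The active-bond relation between sites. -/
def bondRel {Λ : Finset Site} (η : Config Λ) (x y : Site) : Prop :=
  x ∈ inner1 Λ ∧ y ∈ inner1 Λ ∧ adjacent x y ∧
  ((η.val x = 1 ∧ η.val y = 2) ∨ (η.val x = 2 ∧ η.val y = 1))

/-- C is a cluster of η: a maximal connected component of the occupied sites under the
active-bond relation. -/
def IsCluster {Λ : Finset Site} (η : Config Λ) (C : Finset Site) : Prop :=
  ∃ x : Site, η.val x ≠ 0 ∧ ∀ y : Site, y ∈ C ↔ Relation.ReflTransGen (bondRel η) x y

/-- The occupied sites of η form a single cluster. -/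
def SingleCluster {Λ : Finset Site} (η : Config Λ) : Prop :=
  ∃ x : Site, η.val x ≠ 0 ∧
    ∀ y : Site, η.val y ≠ 0 → Relation.ReflTransGen (bondRel η) x y

/-- Dual coordinates, renormalized to land in ℤ² (within a fixed parity class this maps
dual neighbours to adjacent cells). -/
def cellOf (x : Site) : Cell := ((x.1 - x.2).fdiv 2, (x.1 + x.2).fdiv 2)

/-- The sites of Λ occupied by particles of type 2. -/
def type2Sites {Λ : Finset Site} (η : Config Λ) : Finset Site :=
  Λ.filter (fun x => η.val x = 2)

/-- Tile support of a configuration: the polyomino in dual coordinates given by the unit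
squares centered at the particles of type 2. -/
def tileSupport {Λ : Finset Site} (η : Config Λ) : Finset Cell :=
  (type2Sites η).image cellOf

/- ----------  Polyominoes ---------- -/

/-- Perimeter of a polyomino (number of boundary edges, inner boundaries included). -/
def perim (A : Finset Cell) : ℕ :=
  A.sum (fun c => ((nbrs c).filter (fun d => d ∉ A)).card)

def adjIn (A : Finset Cell) (x y : Cell) : Prop := x ∈ A ∧ y ∈ A ∧ adjacent x y

/-- Connectedness of a polyomino. -/
def PolyConnected (A : Finset Cell) : Prop :=
  A.Nonempty ∧ ∀ x ∈ A, ∀ y ∈ A, Relation.ReflTransGen (adjIn A) x y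

/-- Number of holes: bounded (= finite) connected components of the complement. -/
noncomputable def numHoles (A : Finset Cell) : ℕ :=
  Set.ncard {C : Set Cell | ∃ d : Cell, d ∉ A ∧
    C = {e : Cell | Relation.ReflTransGen (fun u v => adjacent u v ∧ u ∉ A ∧ v ∉ A) d e} ∧
    C.Finite}

/-- The four cells having lattice point v as a corner. -/
def cellsAt (v : Cell) : Finset Cell :=
  {(v.1 - 1, v.2 - 1), (v.1 - 1, v.2), (v.1, v.2 - 1), v}

/-- The lattice points that are corners of cells of A. -/
def vertexSet (A : Finset Cell) : Finset Cell :=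
  A.biUnion (fun c => {c, (c.1 + 1, c.2), (c.1, c.2 + 1), (c.1 + 1, c.2 + 1)})

def occAt (A : Finset Cell) (v : Cell) : ℕ := ((cellsAt v).filter (fun c => c ∈ A)).card

/-- Number of convex corners ψ(A): vertices with exactly one incident occupied cell. -/
def convexCorners (A : Finset Cell) : ℕ :=
  (vertexSet A).sum (fun v => if occAt A v = 1 then 1 else 0)

/-- Number of concave corners φ(A): a vertex with three incident occupied cells counts
once, a vertex with two diagonally opposite occupied cells counts twice. -/
def concaveCorners (A : Finset Cell) : ℕ :=
  (vertexSet A).sum (fun v =>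
    if occAt A v = 3 then 1
    else if occAt A v = 2 ∧ (((v.1 - 1, v.2 - 1) ∈ A ∧ v ∈ A) ∨
          ((v.1 - 1, v.2) ∈ A ∧ (v.1, v.2 - 1) ∈ A)) then 2
    else 0)

/-- T(A) = 2P(A) + ψ(A) − φ(A). -/
def Tpoly (A : Finset Cell) : ℤ :=
  2 * (perim A : ℤ) + (convexCorners A : ℤ) - (concaveCorners A : ℤ)

/-- For connected polyominoes, T(A) = 2P(A) + 4 − 4Q(A). -/
noncomputable def Tconn (A : Finset Cell) : ℤ :=
  2 * (perim A : ℤ) + 4 - 4 * (numHoles A : ℤ)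

/-- Width (number of columns) of the circumscribing rectangle. -/
def polyWidth (A : Finset Cell) : ℤ :=
  (WithBot.unbotD 0 (A.image Prod.fst).max) - (WithTop.untopD 0 (A.image Prod.fst).min) + 1

/-- Height (number of rows) of the circumscribing rectangle. -/
def polyHeight (A : Finset Cell) : ℤ :=
  (WithBot.unbotD 0 (A.image Prod.snd).max) - (WithTop.untopD 0 (A.image Prod.snd).min) + 1

/-- A polyomino is monotone if its perimeter equals the perimeter of its circumscribing
rectangle. -/
def MonotonePoly (A : Finset Cell) : Prop :=
  (perim A : ℤ) = 2 * (polyWidth A + polyHeight A)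

/-- The reference standard polyomino: an (l+ζ)×l rectangle (quasi-square, ζ ∈ {0,1})
with a bar of length k attached to a longest side, starting at offset a. -/
def baseStd (l ζ a k : ℕ) : Finset Cell :=
  ((Finset.range (l + ζ)) ×ˢ (Finset.range l)).image
      (fun q => (((q.1 : ℤ), (q.2 : ℤ)) : Cell))
    ∪ (Finset.range k).image (fun i => ((((a + i : ℕ) : ℤ), (l : ℤ)) : Cell))

/-- The eight symmetries of the square lattice. -/
def dihedralMaps : List (Cell → Cell) :=
  [fun c => (c.1, c.2), fun c => (-c.1, c.2), fun c => (c.1, -c.2), fun c => (-c.1, -c.2),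
   fun c => (c.2, c.1), fun c => (-c.2, c.1), fun c => (c.2, -c.1), fun c => (-c.2, -c.1)]

/-- A standard polyomino: a quasi-square with possibly a bar attached to one of its
longest sides (up to lattice symmetries and translations). -/
def IsStandardPoly (A : Finset Cell) : Prop :=
  ∃ l ζ a k : ℕ, 1 ≤ l ∧ ζ ≤ 1 ∧ a + k ≤ l + ζ ∧
    ∃ f ∈ dihedralMaps, ∃ t : Cell,
      A = (baseStd l ζ a k).image (fun c => (((f c).1 + t.1, (f c).2 + t.2) : Cell))

/- ----------  tb-tiled configurations ---------- -/

/-- V_{*,k}: configurations with exactly k particles of type 2, all lying in Λ⁻⁻. -/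
def VStar (Λ : Finset Site) (k : ℕ) : Set (Config Λ) :=
  {η | numType2 η = k ∧ ∀ x, η.val x = 2 → x ∈ inner2 Λ}

/-- V_{*,k}^{4k}: configurations of V_{*,k} with exactly 4k active bonds and no isolated
particle of type 1 (the tb-tiled configurations with k particles of type 2). -/
def VTiled (Λ : Finset Site) (k : ℕ) : Set (Config Λ) :=
  {η | η ∈ VStar Λ k ∧ numBonds η = 4 * k ∧
    ∀ x, η.val x = 1 → ∃ y ∈ nbrs x, η.val y = 2}

/-- All particles of type 2 have the same (site) parity. -/
def SameParity2 {Λ : Finset Site} (η : Config Λ) : Prop :=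
  ∀ x y : Site, η.val x = 2 → η.val y = 2 → (x.1 + x.2) % 2 = (y.1 + y.2) % 2

/-- A standard configuration: tile support a standard polyomino (all type-2 particles of
one parity). -/
def IsStandardConfig {Λ : Finset Site} (η : Config Λ) : Prop :=
  SameParity2 η ∧ IsStandardPoly (tileSupport η)

/-- A tb-tiled configuration: at least one particle of type 2, every particle of type 2
saturated, no isolated particle of type 1. -/
def IsTbTiled {Λ : Finset Site} (η : Config Λ) : Prop :=
  (∃ x, η.val x = 2) ∧
  (∀ x, η.val x = 2 → ∀ y ∈ nbrs x, η.val y = 1) ∧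
  (∀ x, η.val x = 1 → ∃ y ∈ nbrs x, η.val y = 2)

/-- η is the tb-tiled droplet with type-2 sites S: type-2 exactly on S, type-1 exactly
on the border of S, empty elsewhere. -/
def IsTbDroplet {Λ : Finset Site} (η : Config Λ) (S : Finset Site) : Prop :=
  (∀ x, η.val x = 2 ↔ x ∈ S) ∧ (∀ x, η.val x = 1 ↔ x ∈ siteBorder S)

/- ----------  cluster-wise quantities ---------- -/

def numType1In {Λ : Finset Site} (η : Config Λ) (C : Finset Site) : ℕ :=
  (C.filter (fun x => η.val x = 1)).card

def numType2In {Λ : Finset Site} (η : Config Λ) (C : Finset Site) : ℕ :=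
  (C.filter (fun x => η.val x = 2)).card

def numBondsIn {Λ : Finset Site} (η : Config Λ) (C : Finset Site) : ℕ :=
  ((C ×ˢ C).filter (fun q => q.1 ∈ inner1 Λ ∧ q.2 ∈ inner1 Λ ∧ adjacent q.1 q.2 ∧
    η.val q.1 = 1 ∧ η.val q.2 = 2)).card

def tileSupportIn {Λ : Finset Site} (η : Config Λ) (C : Finset Site) : Finset Cell :=
  (C.filter (fun x => η.val x = 2)).image cellOf

/-- Number of active bonds incident to the site x. -/
def bondDeg {Λ : Finset Site} (η : Config Λ) (x : Site) : ℕ :=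
  ((nbrs x).filter (fun y => x ∈ inner1 Λ ∧ y ∈ inner1 Λ ∧
    ((η.val x = 1 ∧ η.val y = 2) ∨ (η.val x = 2 ∧ η.val y = 1)))).card

/-- Number of missing bonds of the type-1 particles of C. -/
def missingBonds {Λ : Finset Site} (η : Config Λ) (C : Finset Site) : ℤ :=
  ∑ x ∈ C.filter (fun x => η.val x = 1), (4 - (bondDeg η x : ℤ))

/- ----------  geometry for the energy-reduction mechanisms ---------- -/

/-- A site is lattice-connecting: there is a n.n. path of empty sites from it to ∂⁻Λ. -/
def LatticeConnecting {Λ : Finset Site} (η : Config Λ) (x : Site) : Prop :=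
  ∃ l : List Site, List.Chain adjacent x l ∧
    (x :: l).getLast (List.cons_ne_nil x l) ∈ intBdry Λ ∧
    ∀ y ∈ l, y ∈ Λ ∧ η.val y = 0

/-- A pending dimer (x,y): a lattice-connecting type-1 particle x whose unique active
bond is with the adjacent type-2 particle y, which has at most three active bonds. -/
def PendingDimer {Λ : Finset Site} (η : Config Λ) (x y : Site) : Prop :=
  bondRel η x y ∧ η.val x = 1 ∧ η.val y = 2 ∧ LatticeConnecting η x ∧
  bondDeg η x = 1 ∧ bondDeg η y ≤ 3

/-- The sites of a horizontal (in dual coordinates) beam of length l: l+1 particles of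
type 1 at mutual dual distance 1, with left-most site p. -/
def beamSites (p : Site) (l : ℕ) : Finset Site :=
  (Finset.range (l + 1)).image (fun i : ℕ => ((p.1 + (i : ℤ), p.2 - (i : ℤ)) : Site))

/-- The center row of the (south) support of the beam. -/
def centerSites (p : Site) (l : ℕ) : Finset Site :=
  (Finset.range l).image (fun i : ℕ => ((p.1 + (i : ℤ), p.2 - 1 - (i : ℤ)) : Site))

/-- The basement row of the (south) support of the beam. -/
def basementSites (p : Site) (l : ℕ) : Finset Site :=
  (Finset.range (l + 1)).image (fun i : ℕ => ((p.1 - 1 + (i : ℤ), p.2 - 1 - (i : ℤ)) : Site))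

/-- The (south) support of a beam/bridge. -/
def bridgeSupport (p : Site) (l : ℕ) : Finset Site :=
  beamSites p l ∪ centerSites p l ∪ basementSites p l

/-- The 12 sites of a slot: a 4×4 block minus its four corner sites; p is the lower-left
corner of the block. -/
def slotSites (p : Site) : Finset Site :=
  ((Finset.range 4 ×ˢ Finset.range 4).image
      (fun ij => ((p.1 + (ij.1 : ℤ), p.2 + (ij.2 : ℤ)) : Site))) \
    {(p.1, p.2), (p.1 + 3, p.2), (p.1, p.2 + 3), (p.1 + 3, p.2 + 3)}

/-- The slot-conjugate (diagonally opposite) ordered pairs of central sites of a slot. -/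
def slotDiagPairs (p : Site) : List (Site × Site) :=
  [((p.1 + 1, p.2 + 1), (p.1 + 2, p.2 + 2)), ((p.1 + 2, p.2 + 2), (p.1 + 1, p.2 + 1)),
   ((p.1 + 1, p.2 + 2), (p.1 + 2, p.2 + 1)), ((p.1 + 2, p.2 + 1), (p.1 + 1, p.2 + 2))]

/-- The type-2 sites of the bar added on side d (0 = north, 1 = south, 2 = east,
3 = west, in dual coordinates) of the m×n dual rectangle with corner p. -/
def sideBar (p : Site) (m n : ℕ) (d : Fin 4) : Finset Site :=
  if d = 0 then dualRect (p.1 + (n : ℤ), p.2 + (n : ℤ)) m 1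
  else if d = 1 then dualRect (p.1 - 1, p.2 - 1) m 1
  else if d = 2 then dualRect (p.1 + (m : ℤ), p.2 - (m : ℤ)) 1 n
  else dualRect (p.1 - 1, p.2 + 1) 1 n

/-- The length of side d of an m×n dual rectangle. -/
def sideLen (m n : ℕ) (d : Fin 4) : ℕ := if (d : ℕ) ≤ 1 then m else n

/-- The type-2 sites left after removing the outermost bar on side d of the m×n dual
rectangle with corner p. -/
def shrunkRect (p : Site) (m n : ℕ) (d : Fin 4) : Finset Site :=
  if d = 0 then dualRect p m (n - 1)
  else if d = 1 then dualRect (p.1 + 1, p.2 + 1) m (n - 1)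
  else if d = 2 then dualRect p (m - 1) n
  else dualRect (p.1 + 1, p.2 - 1) (m - 1) n

namespace PolyProof

lemma adjacent_iff {c d : Cell} : adjacent c d ↔
    d = (c.1 + 1, c.2) ∨ d = (c.1 - 1, c.2) ∨ d = (c.1, c.2 + 1) ∨ d = (c.1, c.2 - 1) := by
  rcases abs_cases (c.1 - d.1) with ⟨h1,h1'⟩|⟨h1,h1'⟩ <;>
  rcases abs_cases (c.2 - d.2) with ⟨h2,h2'⟩|⟨h2,h2'⟩ <;>
  simp only [adjacent, h1, h2, Prod.ext_iff] <;> omega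

lemma mem_nbrs {c d : Cell} : d ∈ nbrs c ↔ adjacent c d := by
  simp [nbrs, adjacent_iff]

lemma mem_cellsAt {c v : Cell} : c ∈ cellsAt v ↔
    v = c ∨ v = (c.1 + 1, c.2) ∨ v = (c.1, c.2 + 1) ∨ v = (c.1 + 1, c.2 + 1) := by
  simp only [cellsAt, Finset.mem_insert, Finset.mem_singleton, Prod.ext_iff]
  constructor
  · rintro (h|h|h|h) <;> omega
  · rintro (h|h|h|h) <;> omega

lemma mem_vertexSet {A : Finset Cell} {v : Cell} :
    v ∈ vertexSet A ↔ ∃ c ∈ A, c ∈ cellsAt v := by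
  simp only [vertexSet, Finset.mem_biUnion, Finset.mem_insert, Finset.mem_singleton]
  refine ⟨fun ⟨c, hc, h⟩ => ⟨c, hc, ?_⟩, fun ⟨c, hc, h⟩ => ⟨c, hc, ?_⟩⟩
  · rw [mem_cellsAt]; tauto
  · rw [mem_cellsAt] at h; tauto

def corners (c : Cell) : Finset Cell := {c, (c.1 + 1, c.2), (c.1, c.2 + 1), (c.1 + 1, c.2 + 1)}

lemma mem_corners {c v : Cell} : v ∈ corners c ↔ c ∈ cellsAt v := by
  rw [mem_cellsAt]; simp [corners]

lemma card_corners (c : Cell) : (corners c).card = 4 := by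
  simp only [corners]
  rw [Finset.card_insert_of_notMem, Finset.card_insert_of_notMem,
    Finset.card_insert_of_notMem, Finset.card_singleton] <;>
    simp [Prod.ext_iff] <;> omega

lemma sum_occAt (A : Finset Cell) : ∑ v ∈ vertexSet A, occAt A v = 4 * A.card := by
  have h1 : ∀ v, occAt A v = ∑ c ∈ A, if c ∈ cellsAt v then 1 else 0 := by
    intro v
    rw [occAt, Finset.card_filter]
    rw [← Finset.sum_filter, ← Finset.sum_filter]
    congr 1
    ext c
    simp [and_comm]
  simp only [h1]
  rw [Finset.sum_comm]
  have h2 : ∀ c ∈ A, (∑ v ∈ vertexSet A, if c ∈ cellsAt v then 1 else 0) = 4 := by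
    intro c hc
    rw [← Finset.card_filter]
    have : (vertexSet A).filter (fun v => c ∈ cellsAt v) = corners c := by
      ext v
      simp only [Finset.mem_filter, mem_corners]
      exact ⟨fun h => h.2, fun h => ⟨mem_vertexSet.mpr ⟨c, hc, h⟩, h⟩⟩
    rw [this, card_corners]
  rw [Finset.sum_congr rfl h2, Finset.sum_const, smul_eq_mul, mul_comm]

end PolyProof

namespace PolyProof

/-- Global set of boundary (cell, outside-neighbour) pairs. -/
def edgePairs (A : Finset Cell) : Finset (Cell × Cell) :=
  (A ×ˢ A.biUnion nbrs).filter (fun p => p.2 ∉ A ∧ p.2 ∈ nbrs p.1)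

lemma perim_eq_card_edgePairs (A : Finset Cell) : perim A = (edgePairs A).card := by
  rw [perim, Finset.card_eq_sum_card_fiberwise (s := edgePairs A) (f := Prod.fst) (t := A)
    (fun p hp => (Finset.mem_product.mp (Finset.mem_filter.mp hp).1).1)]
  refine Finset.sum_congr rfl fun c hc => ?_
  rw [eq_comm]
  refine Finset.card_bij (fun p _ => p.2) ?_ ?_ ?_
  · rintro ⟨a, b⟩ hp
    simp only [edgePairs, Finset.mem_filter, Finset.mem_product] at hp
    obtain ⟨⟨⟨ha, hb⟩, hb2, hadj⟩, rfl⟩ := hp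
    exact Finset.mem_filter.mpr ⟨hadj, hb2⟩
  · rintro ⟨a, b⟩ hp ⟨a', b'⟩ hp' h
    simp only [Finset.mem_filter, edgePairs] at hp hp'
    exact Prod.ext_iff.mpr ⟨hp.2.trans hp'.2.symm, h⟩
  · intro b hb
    simp only [Finset.mem_filter] at hb
    refine ⟨(c, b), Finset.mem_filter.mpr ⟨?_, rfl⟩, rfl⟩
    exact Finset.mem_filter.mpr ⟨Finset.mem_product.mpr ⟨hc, Finset.mem_biUnion.mpr ⟨c, hc, hb.1⟩⟩,
      hb.2, hb.1⟩

def bnd (A : Finset Cell) (v : Cell) : ℕ :=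
  ((cellsAt v ×ˢ cellsAt v).filter
    (fun p : Cell × Cell => p.1 ∈ A ∧ p.2 ∉ A ∧ adjacent p.1 p.2)).card

lemma bnd_eq (A : Finset Cell) (v : Cell) :
    bnd A v = ((edgePairs A).filter
      (fun p : Cell × Cell => p.1 ∈ cellsAt v ∧ p.2 ∈ cellsAt v)).card := by
  rw [bnd]
  refine congrArg Finset.card (Finset.ext fun ⟨a, b⟩ => ?_)
  simp only [edgePairs, Finset.mem_filter, Finset.mem_product]
  constructor
  · rintro ⟨⟨h1, h2⟩, ha, hb, hadj⟩
    exact ⟨⟨⟨ha, Finset.mem_biUnion.mpr ⟨a, ha, mem_nbrs.mpr hadj⟩⟩, hb, mem_nbrs.mpr hadj⟩, h1, h2⟩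
  · rintro ⟨⟨⟨ha, _⟩, hb, hadj⟩, h1, h2⟩
    exact ⟨⟨h1, h2⟩, ha, hb, mem_nbrs.mp hadj⟩

lemma shared_corners {A : Finset Cell} {p : Cell × Cell} (hp : p ∈ edgePairs A) :
    ((vertexSet A).filter (fun v => p.1 ∈ cellsAt v ∧ p.2 ∈ cellsAt v)).card = 2 := by
  obtain ⟨a, b⟩ := p
  simp only [edgePairs, Finset.mem_filter, Finset.mem_product] at hp
  obtain ⟨⟨ha, _⟩, hb, hadj⟩ := hp
  rw [mem_nbrs, adjacent_iff] at hadj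
  have hmem : ∀ v : Cell, a ∈ cellsAt v → v ∈ vertexSet A := fun v h =>
    mem_vertexSet.mpr ⟨a, ha, h⟩
  rcases hadj with h|h|h|h <;> subst h
  · -- b = (a.1+1, a.2) : shared corners (a.1+1, a.2), (a.1+1, a.2+1)
    have : (vertexSet A).filter (fun v => a ∈ cellsAt v ∧ (a.1+1, a.2) ∈ cellsAt v)
        = {(a.1+1, a.2), (a.1+1, a.2+1)} := by
      ext v
      simp only [Finset.mem_filter, Finset.mem_insert, Finset.mem_singleton]
      constructor
      · rintro ⟨-, h1, h2⟩
        rw [mem_cellsAt] at h1 h2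
        simp only [Prod.ext_iff] at h1 h2 ⊢
        omega
      · rintro (rfl|rfl) <;> refine ⟨hmem _ ?_, ?_, ?_⟩ <;>
          (rw [mem_cellsAt]; simp [Prod.ext_iff] <;> omega)
    rw [this]
    rw [Finset.card_insert_of_notMem (by simp [Prod.ext_iff]), Finset.card_singleton]
  · have : (vertexSet A).filter (fun v => a ∈ cellsAt v ∧ (a.1-1, a.2) ∈ cellsAt v)
        = {(a.1, a.2), (a.1, a.2+1)} := by
      ext v
      simp only [Finset.mem_filter, Finset.mem_insert, Finset.mem_singleton]
      constructor
      · rintro ⟨-, h1, h2⟩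
        rw [mem_cellsAt] at h1 h2
        simp only [Prod.ext_iff] at h1 h2 ⊢
        omega
      · rintro (rfl|rfl) <;> refine ⟨hmem _ ?_, ?_, ?_⟩ <;>
          (rw [mem_cellsAt]; simp [Prod.ext_iff] <;> omega)
    rw [this]
    rw [Finset.card_insert_of_notMem (by simp [Prod.ext_iff]), Finset.card_singleton]
  · have : (vertexSet A).filter (fun v => a ∈ cellsAt v ∧ (a.1, a.2+1) ∈ cellsAt v)
        = {(a.1, a.2+1), (a.1+1, a.2+1)} := by
      ext v
      simp only [Finset.mem_filter, Finset.mem_insert, Finset.mem_singleton]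
      constructor
      · rintro ⟨-, h1, h2⟩
        rw [mem_cellsAt] at h1 h2
        simp only [Prod.ext_iff] at h1 h2 ⊢
        omega
      · rintro (rfl|rfl) <;> refine ⟨hmem _ ?_, ?_, ?_⟩ <;>
          (rw [mem_cellsAt]; simp [Prod.ext_iff] <;> omega)
    rw [this]
    rw [Finset.card_insert_of_notMem (by simp [Prod.ext_iff]), Finset.card_singleton]
  · have : (vertexSet A).filter (fun v => a ∈ cellsAt v ∧ (a.1, a.2-1) ∈ cellsAt v)
        = {(a.1, a.2), (a.1+1, a.2)} := by
      ext v
      simp only [Finset.mem_filter, Finset.mem_insert, Finset.mem_singleton]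
      constructor
      · rintro ⟨-, h1, h2⟩
        rw [mem_cellsAt] at h1 h2
        simp only [Prod.ext_iff] at h1 h2 ⊢
        omega
      · rintro (rfl|rfl) <;> refine ⟨hmem _ ?_, ?_, ?_⟩ <;>
          (rw [mem_cellsAt]; simp [Prod.ext_iff] <;> omega)
    rw [this]
    rw [Finset.card_insert_of_notMem (by simp [Prod.ext_iff]), Finset.card_singleton]

lemma sum_bnd (A : Finset Cell) : ∑ v ∈ vertexSet A, bnd A v = 2 * perim A := by
  have h1 : ∀ v, bnd A v = ∑ p ∈ edgePairs A,
      if (p.1 ∈ cellsAt v ∧ p.2 ∈ cellsAt v) then 1 else 0 := by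
    intro v; rw [bnd_eq, Finset.card_filter]
  simp only [h1]
  rw [Finset.sum_comm]
  have h2 : ∀ p ∈ edgePairs A,
      (∑ v ∈ vertexSet A, if p.1 ∈ cellsAt v ∧ p.2 ∈ cellsAt v then 1 else 0) = 2 := by
    intro p hp
    rw [← Finset.card_filter]
    exact shared_corners hp
  rw [Finset.sum_congr rfl h2, Finset.sum_const, smul_eq_mul, mul_comm,
    perim_eq_card_edgePairs]

end PolyProof

namespace PolyProof

lemma sum_cellsAt {M : Type*} [AddCommMonoid M] (v : Cell) (f : Cell → M) :
    ∑ c ∈ cellsAt v, f c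
      = f (v.1 - 1, v.2 - 1) + f (v.1 - 1, v.2) + f (v.1, v.2 - 1) + f v := by
  have e : cellsAt v
      = insert (v.1 - 1, v.2 - 1) (insert (v.1 - 1, v.2) (insert (v.1, v.2 - 1) {v})) := rfl
  rw [e, Finset.sum_insert (by simp [Prod.ext_iff] <;> omega),
    Finset.sum_insert (by simp [Prod.ext_iff] <;> omega),
    Finset.sum_insert (by simp [Prod.ext_iff] <;> omega), Finset.sum_singleton]
  simp only [add_assoc]

lemma occAt_formula (A : Finset Cell) (v : Cell) :
    occAt A v = (if (v.1 - 1, v.2 - 1) ∈ A then 1 else 0) + (if (v.1 - 1, v.2) ∈ A then 1 else 0)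
      + (if (v.1, v.2 - 1) ∈ A then 1 else 0) + (if v ∈ A then 1 else 0) := by
  rw [occAt, Finset.card_filter, sum_cellsAt]

lemma adj_vert (x y : ℤ) : adjacent (x, y) (x, y + 1) := by
  simp [adjacent]
lemma adj_horiz (x y : ℤ) : adjacent (x, y) (x + 1, y) := by
  simp [adjacent]
lemma adj_symm {c d : Cell} (h : adjacent c d) : adjacent d c := by
  rw [adjacent_iff] at h ⊢
  rcases h with h|h|h|h <;> subst h <;> simp [Prod.ext_iff] <;> omega
lemma not_adj_self (c : Cell) : ¬ adjacent c c := by simp [adjacent]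
lemma not_adj_diag (x y : ℤ) : ¬ adjacent (x, y) (x + 1, y + 1) := by
  rw [adjacent_iff]; simp [Prod.ext_iff] <;> omega
lemma not_adj_diag' (x y : ℤ) : ¬ adjacent (x, y + 1) (x + 1, y) := by
  rw [adjacent_iff]; simp [Prod.ext_iff] <;> omega

lemma bnd_formula (A : Finset Cell) (v : Cell) :
    bnd A v =
      (if (v.1 - 1, v.2 - 1) ∈ A ∧ (v.1 - 1, v.2) ∉ A then 1 else 0)
      + (if (v.1 - 1, v.2) ∈ A ∧ (v.1 - 1, v.2 - 1) ∉ A then 1 else 0)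
      + (if (v.1 - 1, v.2 - 1) ∈ A ∧ (v.1, v.2 - 1) ∉ A then 1 else 0)
      + (if (v.1, v.2 - 1) ∈ A ∧ (v.1 - 1, v.2 - 1) ∉ A then 1 else 0)
      + (if (v.1 - 1, v.2) ∈ A ∧ v ∉ A then 1 else 0)
      + (if v ∈ A ∧ (v.1 - 1, v.2) ∉ A then 1 else 0)
      + (if (v.1, v.2 - 1) ∈ A ∧ v ∉ A then 1 else 0)
      + (if v ∈ A ∧ (v.1, v.2 - 1) ∉ A then 1 else 0) := by
  rw [bnd, Finset.card_filter, Finset.sum_product, sum_cellsAt]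
  rw [sum_cellsAt, sum_cellsAt, sum_cellsAt, sum_cellsAt]
  have a12 : adjacent (v.1 - 1, v.2 - 1) (v.1 - 1, v.2) := by
    have := adj_vert (v.1 - 1) (v.2 - 1); simpa using this
  have a13 : adjacent (v.1 - 1, v.2 - 1) (v.1, v.2 - 1) := by
    have := adj_horiz (v.1 - 1) (v.2 - 1); simpa using this
  have a24 : adjacent (v.1 - 1, v.2) v := by
    have := adj_horiz (v.1 - 1) v.2; simpa [Prod.ext_iff] using this
  have a34 : adjacent (v.1, v.2 - 1) v := by
    have := adj_vert v.1 (v.2 - 1); simpa [Prod.ext_iff] using this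
  have n14 : ¬ adjacent (v.1 - 1, v.2 - 1) v := by
    have := not_adj_diag (v.1 - 1) (v.2 - 1); simpa [Prod.ext_iff] using this
  have n23 : ¬ adjacent (v.1 - 1, v.2) (v.1, v.2 - 1) := by
    have := not_adj_diag' (v.1 - 1) (v.2 - 1); simpa [Prod.ext_iff] using this
  have n41 : ¬ adjacent v (v.1 - 1, v.2 - 1) := fun h => n14 (adj_symm h)
  have n32 : ¬ adjacent (v.1, v.2 - 1) (v.1 - 1, v.2) := fun h => n23 (adj_symm h)
  simp only [a12, a13, a24, a34, adj_symm a12, adj_symm a13, adj_symm a24, adj_symm a34,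
    n14, n23, n41, n32,
    not_adj_self, and_true, and_false, if_false, if_true, iff_true, iff_false,
    not_false_iff, not_true]
  by_cases h1 : (v.1 - 1, v.2 - 1) ∈ A <;> by_cases h2 : (v.1 - 1, v.2) ∈ A <;>
    by_cases h3 : (v.1, v.2 - 1) ∈ A <;> by_cases h4 : v ∈ A <;>
    simp only [h1, h2, h3, h4, if_true, if_false, not_true, not_false_iff, and_true,
      and_false, true_and, false_and, and_self] <;> omega

lemma pointwise (A : Finset Cell) (v : Cell) (hv : v ∈ vertexSet A) :
    bnd A v + occAt A v + (if occAt A v = 1 then 1 else 0)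
      = 4 + (if occAt A v = 3 then 1
        else if occAt A v = 2 ∧ (((v.1 - 1, v.2 - 1) ∈ A ∧ v ∈ A) ∨
            ((v.1 - 1, v.2) ∈ A ∧ (v.1, v.2 - 1) ∈ A)) then 2 else 0) := by
  obtain ⟨c, hcA, hc⟩ := mem_vertexSet.mp hv
  have hv' : (v.1 - 1, v.2 - 1) ∈ A ∨ (v.1 - 1, v.2) ∈ A ∨ (v.1, v.2 - 1) ∈ A ∨ v ∈ A := by
    have : c ∈ cellsAt v := hc
    rw [show cellsAt v
      = insert (v.1 - 1, v.2 - 1) (insert (v.1 - 1, v.2) (insert (v.1, v.2 - 1) {v})) from rfl]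
      at this
    simp only [Finset.mem_insert, Finset.mem_singleton] at this
    rcases this with rfl|rfl|rfl|rfl <;> tauto
  rw [bnd_formula, occAt_formula]
  by_cases h1 : (v.1 - 1, v.2 - 1) ∈ A <;> by_cases h2 : (v.1 - 1, v.2) ∈ A <;>
    by_cases h3 : (v.1, v.2 - 1) ∈ A <;> by_cases h4 : v ∈ A <;>
    simp only [h1, h2, h3, h4, if_true, if_false, not_true, not_false_iff, and_true,
      and_false, true_and, false_and, and_self, true_or, or_true, false_or, or_false,
      not_false_eq_true] <;> norm_num <;> tauto

theorem Tpoly_eq_card (A : Finset Cell) :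
    Tpoly A = 4 * ((vertexSet A).card : ℤ) - 4 * (A.card : ℤ) := by
  have key : ∑ v ∈ vertexSet A, (bnd A v + occAt A v + (if occAt A v = 1 then 1 else 0))
      = ∑ v ∈ vertexSet A, (4 + (if occAt A v = 3 then 1
        else if occAt A v = 2 ∧ (((v.1 - 1, v.2 - 1) ∈ A ∧ v ∈ A) ∨
            ((v.1 - 1, v.2) ∈ A ∧ (v.1, v.2 - 1) ∈ A)) then 2 else 0)) :=
    Finset.sum_congr rfl (fun v hv => pointwise A v hv)
  rw [Finset.sum_add_distrib, Finset.sum_add_distrib, Finset.sum_add_distrib,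
    sum_bnd, sum_occAt, Finset.sum_const, smul_eq_mul, mul_comm] at key
  have hψ : ∑ v ∈ vertexSet A, (if occAt A v = 1 then 1 else 0) = convexCorners A := rfl
  have hφ : ∑ v ∈ vertexSet A, (if occAt A v = 3 then 1
        else if occAt A v = 2 ∧ (((v.1 - 1, v.2 - 1) ∈ A ∧ v ∈ A) ∨
            ((v.1 - 1, v.2) ∈ A ∧ (v.1, v.2 - 1) ∈ A)) then 2 else 0) = concaveCorners A := rfl
  rw [hψ, hφ] at key
  rw [Tpoly]
  omega

end PolyProof

namespace PolyProof

def Xrow (A : Finset Cell) (y : ℤ) : Finset ℤ := (A.filter (fun c => c.2 = y)).image Prod.fst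
def sh (Z : Finset ℤ) : Finset ℤ := Z ∪ Z.image (· + 1)
def bottoms (A : Finset Cell) : Finset Cell := A.filter (fun c => (c.1, c.2 - 1) ∉ A)

lemma mem_Xrow {A : Finset Cell} {y x : ℤ} : x ∈ Xrow A y ↔ (x, y) ∈ A := by
  simp only [Xrow, Finset.mem_image, Finset.mem_filter]
  constructor
  · rintro ⟨⟨a, b⟩, ⟨h, rfl⟩, rfl⟩; exact h
  · intro h; exact ⟨(x, y), ⟨h, rfl⟩, rfl⟩

lemma mem_sh {Z : Finset ℤ} {z : ℤ} : z ∈ sh Z ↔ z ∈ Z ∨ z - 1 ∈ Z := by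
  simp only [sh, Finset.mem_union, Finset.mem_image]
  constructor
  · rintro (h | ⟨a, ha, rfl⟩)
    · exact Or.inl h
    · exact Or.inr (by simpa using ha)
  · rintro (h | h)
    · exact Or.inl h
    · exact Or.inr ⟨z - 1, h, by ring⟩

lemma mem_rowsOf {A : Finset Cell} {y : ℤ} : y ∈ A.image Prod.snd ↔ ∃ x, (x, y) ∈ A := by
  simp only [Finset.mem_image]
  constructor
  · rintro ⟨⟨a, b⟩, h, rfl⟩; exact ⟨a, h⟩
  · rintro ⟨x, h⟩; exact ⟨(x, y), h, rfl⟩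

lemma mem_colsOf {A : Finset Cell} {x : ℤ} : x ∈ A.image Prod.fst ↔ ∃ y, (x, y) ∈ A := by
  simp only [Finset.mem_image]
  constructor
  · rintro ⟨⟨a, b⟩, h, rfl⟩; exact ⟨b, h⟩
  · rintro ⟨y, h⟩; exact ⟨(x, y), h, rfl⟩

lemma mem_vertexSet' {A : Finset Cell} {x y : ℤ} :
    (x, y) ∈ vertexSet A ↔
      (x, y) ∈ A ∨ (x, y - 1) ∈ A ∨ (x - 1, y) ∈ A ∨ (x - 1, y - 1) ∈ A := by
  rw [mem_vertexSet]
  constructor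
  · rintro ⟨c, hc, hcell⟩
    rw [mem_cellsAt] at hcell
    rcases hcell with h|h|h|h
    · left; rwa [← h] at hc
    · right; right; left
      have hc2 : c = (x - 1, y) := by
        rw [Prod.ext_iff] at h ⊢; simp only at h ⊢; omega
      rwa [← hc2]
    · right; left
      have hc2 : c = (x, y - 1) := by
        rw [Prod.ext_iff] at h ⊢; simp only at h ⊢; omega
      rwa [← hc2]
    · right; right; right
      have hc2 : c = (x - 1, y - 1) := by
        rw [Prod.ext_iff] at h ⊢; simp only at h ⊢; omega
      rwa [← hc2]
  · rintro (h|h|h|h)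
    · exact ⟨(x, y), h, by rw [mem_cellsAt]; tauto⟩
    · refine ⟨(x, y - 1), h, ?_⟩
      rw [mem_cellsAt]; right; right; left
      simp [Prod.ext_iff] <;> omega
    · refine ⟨(x - 1, y), h, ?_⟩
      rw [mem_cellsAt]; right; left
      simp [Prod.ext_iff] <;> omega
    · refine ⟨(x - 1, y - 1), h, ?_⟩
      rw [mem_cellsAt]; right; right; right
      simp [Prod.ext_iff] <;> omega

lemma Xrow_vertexSet (A : Finset Cell) (y : ℤ) :
    Xrow (vertexSet A) y = sh (Xrow A y ∪ Xrow A (y - 1)) := by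
  ext x
  rw [mem_Xrow, mem_sh, Finset.mem_union, Finset.mem_union, mem_Xrow, mem_Xrow,
    mem_Xrow, mem_Xrow, mem_vertexSet']
  tauto

lemma rows_vertexSet (A : Finset Cell) :
    (vertexSet A).image Prod.snd = sh (A.image Prod.snd) := by
  ext y
  rw [mem_rowsOf, mem_sh]
  constructor
  · rintro ⟨x, hx⟩
    rw [mem_vertexSet'] at hx
    rcases hx with h|h|h|h
    · exact Or.inl (mem_rowsOf.mpr ⟨x, h⟩)
    · exact Or.inr (mem_rowsOf.mpr ⟨x, h⟩)
    · exact Or.inl (mem_rowsOf.mpr ⟨x - 1, h⟩)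
    · exact Or.inr (mem_rowsOf.mpr ⟨x - 1, h⟩)
  · rintro (h | h)
    · obtain ⟨x, hx⟩ := mem_rowsOf.mp h
      exact ⟨x, mem_vertexSet'.mpr (Or.inl hx)⟩
    · obtain ⟨x, hx⟩ := mem_rowsOf.mp h
      exact ⟨x, mem_vertexSet'.mpr (Or.inr (Or.inl hx))⟩

lemma card_eq_sum_rows (S : Finset Cell) :
    S.card = ∑ y ∈ S.image Prod.snd, (Xrow S y).card := by
  rw [Finset.card_eq_sum_card_fiberwise (f := Prod.snd) (t := S.image Prod.snd)
    (fun c hc => Finset.mem_image_of_mem _ hc)]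
  refine Finset.sum_congr rfl fun y _ => ?_
  rw [Xrow, Finset.card_image_of_injOn]
  rintro ⟨a, b⟩ ha ⟨a', b'⟩ hb h
  simp only [Finset.mem_coe, Finset.mem_filter] at ha hb
  simp only at h
  rw [Prod.ext_iff]
  exact ⟨h, ha.2.trans hb.2.symm⟩

lemma Xrow_empty {A : Finset Cell} {y : ℤ} (h : y ∉ A.image Prod.snd) : Xrow A y = ∅ := by
  rw [Finset.eq_empty_iff_forall_notMem]
  intro x hx
  exact h (mem_rowsOf.mpr ⟨x, mem_Xrow.mp hx⟩)

end PolyProof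

namespace PolyProof

lemma insert_subset_sh (Z : Finset ℤ) (hZ : Z.Nonempty) :
    insert (Z.max' hZ + 1) Z ⊆ sh Z := by
  intro z hz
  rcases Finset.mem_insert.mp hz with rfl | hz
  · exact mem_sh.mpr (Or.inr (by simpa using Z.max'_mem hZ))
  · exact mem_sh.mpr (Or.inl hz)

lemma max_succ_not_mem (Z : Finset ℤ) (hZ : Z.Nonempty) : Z.max' hZ + 1 ∉ Z := by
  intro h
  have := Z.le_max' _ h
  omega

lemma card_sh_ge (Z : Finset ℤ) (hZ : Z.Nonempty) : Z.card + 1 ≤ (sh Z).card := by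
  calc Z.card + 1 = (insert (Z.max' hZ + 1) Z).card := by
        rw [Finset.card_insert_of_notMem (max_succ_not_mem Z hZ)]
    _ ≤ (sh Z).card := Finset.card_le_card (insert_subset_sh Z hZ)

lemma sh_eq_of_card (Z : Finset ℤ) (hZ : Z.Nonempty) (h : (sh Z).card ≤ Z.card + 1) :
    Z = Finset.Icc (Z.min' hZ) (Z.max' hZ) := by
  have hins : sh Z = insert (Z.max' hZ + 1) Z := by
    refine ((Finset.eq_of_subset_of_card_le (insert_subset_sh Z hZ) ?_)).symm
    rwa [Finset.card_insert_of_notMem (max_succ_not_mem Z hZ)]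
  have step : ∀ z ∈ Z, z < Z.max' hZ → z + 1 ∈ Z := by
    intro z hz hlt
    have h1 : z + 1 ∈ sh Z := mem_sh.mpr (Or.inr (by simpa using hz))
    rw [hins] at h1
    rcases Finset.mem_insert.mp h1 with h2 | h2
    · omega
    · exact h2
  have key : ∀ w : ℤ, Z.min' hZ ≤ w → w ≤ Z.max' hZ → w ∈ Z :=
    Int.le_induction (fun _ => Z.min'_mem hZ)
      (fun n _ ih hle => step n (ih (by omega)) (by omega))
  apply Finset.Subset.antisymm
  · intro z hz
    exact Finset.mem_Icc.mpr ⟨Z.min'_le z hz, Z.le_max' z hz⟩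
  · intro w hw
    rw [Finset.mem_Icc] at hw
    exact key w hw.1 hw.2

lemma VS_card_formula (A : Finset Cell) :
    (vertexSet A).card
      = ∑ y ∈ sh (A.image Prod.snd), (sh (Xrow A y ∪ Xrow A (y - 1))).card := by
  rw [card_eq_sum_rows (vertexSet A), rows_vertexSet]
  exact Finset.sum_congr rfl fun y _ => by rw [Xrow_vertexSet]

lemma bottoms_subset (A : Finset Cell) : bottoms A ⊆ A := Finset.filter_subset _ _

lemma Uy_card (A : Finset Cell) (y : ℤ) :
    (Xrow A y ∪ Xrow A (y - 1)).card
      = (Xrow A (y - 1)).card + (Xrow A y \ Xrow A (y - 1)).card := by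
  rw [Finset.union_comm, ← Finset.union_sdiff_self_eq_union,
    Finset.card_union_of_disjoint Finset.disjoint_sdiff]

lemma sum_shift (A : Finset Cell) :
    ∑ y ∈ sh (A.image Prod.snd), (Xrow A (y - 1)).card = A.card := by
  have hsub : (A.image Prod.snd).image (· + 1) ⊆ sh (A.image Prod.snd) := by
    intro z hz
    obtain ⟨y, hy, rfl⟩ := Finset.mem_image.mp hz
    exact mem_sh.mpr (Or.inr (by simpa using hy))
  rw [← Finset.sum_subset hsub (fun y _ hy => ?_)]
  · rw [Finset.sum_image (fun a _ b _ h => by omega)]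
    rw [card_eq_sum_rows A]
    exact Finset.sum_congr rfl fun y _ => by norm_num
  · rw [Xrow_empty, Finset.card_empty]
    intro hmem
    exact hy (Finset.mem_image.mpr ⟨y - 1, hmem, by ring⟩)

lemma sum_diff_eq_bottoms (A : Finset Cell) :
    ∑ y ∈ sh (A.image Prod.snd), (Xrow A y \ Xrow A (y - 1)).card = (bottoms A).card := by
  rw [Finset.card_eq_sum_card_fiberwise (f := Prod.snd) (t := sh (A.image Prod.snd))
    (fun c hc => mem_sh.mpr (Or.inl (Finset.mem_image_of_mem _ (bottoms_subset A hc))))]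
  refine Finset.sum_congr rfl fun y _ => ?_
  have himg : Xrow A y \ Xrow A (y - 1)
      = ((bottoms A).filter (fun c => c.2 = y)).image Prod.fst := by
    ext x
    simp only [Finset.mem_sdiff, mem_Xrow, Finset.mem_image, Finset.mem_filter, bottoms]
    constructor
    · rintro ⟨h1, h2⟩
      exact ⟨(x, y), ⟨⟨h1, by simpa using h2⟩, rfl⟩, rfl⟩
    · rintro ⟨⟨a, b⟩, ⟨⟨hA', hb⟩, rfl⟩, rfl⟩
      exact ⟨hA', by simpa using hb⟩
  rw [himg, Finset.card_image_of_injOn]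
  rintro ⟨a, b⟩ ha ⟨a', b'⟩ hb h
  simp only [Finset.mem_coe, Finset.mem_filter] at ha hb
  simp only at h
  rw [Prod.ext_iff]
  exact ⟨h, ha.2.trans hb.2.symm⟩

lemma bottoms_image (A : Finset Cell) :
    (bottoms A).image Prod.fst = A.image Prod.fst := by
  apply Finset.Subset.antisymm
  · exact Finset.image_subset_image (bottoms_subset A)
  · intro x hx
    obtain ⟨y0, hy0⟩ := mem_colsOf.mp hx
    set Yx := (A.filter (fun c => c.1 = x)).image Prod.snd with hYx
    have hne : Yx.Nonempty := ⟨y0, Finset.mem_image.mpr ⟨(x, y0), Finset.mem_filter.mpr ⟨hy0, rfl⟩, rfl⟩⟩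
    set m := Yx.min' hne with hm
    have hmem : (x, m) ∈ A := by
      have hmm : m ∈ Yx := Yx.min'_mem hne
      rw [hYx] at hmm
      obtain ⟨⟨a, b⟩, hab, h2⟩ := Finset.mem_image.mp hmm
      obtain ⟨haA, ha1⟩ := Finset.mem_filter.mp hab
      simp only at h2 ha1
      rwa [show ((x : ℤ), m) = (a, b) by rw [Prod.ext_iff]; exact ⟨ha1.symm, h2.symm⟩]
    have hnot : (x, m - 1) ∉ A := by
      intro hc
      have : m - 1 ∈ Yx := Finset.mem_image.mpr ⟨(x, m - 1), Finset.mem_filter.mpr ⟨hc, rfl⟩, rfl⟩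
      have := Yx.min'_le _ this
      omega
    exact Finset.mem_image.mpr ⟨(x, m), Finset.mem_filter.mpr ⟨hmem, by simpa using hnot⟩, rfl⟩

lemma Uy_nonempty {A : Finset Cell} {y : ℤ} (hy : y ∈ sh (A.image Prod.snd)) :
    (Xrow A y ∪ Xrow A (y - 1)).Nonempty := by
  rcases mem_sh.mp hy with h | h
  · obtain ⟨x, hx⟩ := mem_rowsOf.mp h
    exact ⟨x, Finset.mem_union_left _ (mem_Xrow.mpr hx)⟩
  · obtain ⟨x, hx⟩ := mem_rowsOf.mp h
    exact ⟨x, Finset.mem_union_right _ (mem_Xrow.mpr hx)⟩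

lemma rows_nonempty {A : Finset Cell} (hA : A.Nonempty) : (A.image Prod.snd).Nonempty :=
  hA.image _

lemma main_lower (A : Finset Cell) (hA : A.Nonempty) :
    A.card + (A.image Prod.fst).card + (A.image Prod.snd).card + 1 ≤ (vertexSet A).card := by
  rw [VS_card_formula]
  have step1 : ∑ y ∈ sh (A.image Prod.snd), ((Xrow A y ∪ Xrow A (y - 1)).card + 1)
      ≤ ∑ y ∈ sh (A.image Prod.snd), (sh (Xrow A y ∪ Xrow A (y - 1))).card :=
    Finset.sum_le_sum fun y hy => card_sh_ge _ (Uy_nonempty hy)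
  have step2 : ∑ y ∈ sh (A.image Prod.snd), ((Xrow A y ∪ Xrow A (y - 1)).card + 1)
      = A.card + (bottoms A).card + (sh (A.image Prod.snd)).card := by
    rw [Finset.sum_add_distrib, Finset.sum_const, smul_eq_mul, mul_one]
    congr 1
    calc ∑ y ∈ sh (A.image Prod.snd), (Xrow A y ∪ Xrow A (y - 1)).card
        = ∑ y ∈ sh (A.image Prod.snd),
            ((Xrow A (y - 1)).card + (Xrow A y \ Xrow A (y - 1)).card) :=
          Finset.sum_congr rfl fun y _ => Uy_card A y
      _ = A.card + (bottoms A).card := by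
          rw [Finset.sum_add_distrib, sum_shift, sum_diff_eq_bottoms]
  have h3 : (A.image Prod.fst).card ≤ (bottoms A).card := by
    rw [← bottoms_image A]
    exact Finset.card_image_le
  have h4 : (A.image Prod.snd).card + 1 ≤ (sh (A.image Prod.snd)).card :=
    card_sh_ge _ (rows_nonempty hA)
  omega

lemma main_equality (A : Finset Cell) (hA : A.Nonempty)
    (heq : (vertexSet A).card
      = A.card + (A.image Prod.fst).card + (A.image Prod.snd).card + 1) :
    ((sh (A.image Prod.snd)).card = (A.image Prod.snd).card + 1) ∧
    (∀ y ∈ sh (A.image Prod.snd),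
      (sh (Xrow A y ∪ Xrow A (y - 1))).card = (Xrow A y ∪ Xrow A (y - 1)).card + 1) ∧
    ((bottoms A).card = (A.image Prod.fst).card) := by
  have hf := VS_card_formula A
  have step1 : ∀ y ∈ sh (A.image Prod.snd),
      (Xrow A y ∪ Xrow A (y - 1)).card + 1 ≤ (sh (Xrow A y ∪ Xrow A (y - 1))).card :=
    fun y hy => card_sh_ge _ (Uy_nonempty hy)
  have step2 : ∑ y ∈ sh (A.image Prod.snd), ((Xrow A y ∪ Xrow A (y - 1)).card + 1)
      = A.card + (bottoms A).card + (sh (A.image Prod.snd)).card := by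
    rw [Finset.sum_add_distrib, Finset.sum_const, smul_eq_mul, mul_one]
    congr 1
    calc ∑ y ∈ sh (A.image Prod.snd), (Xrow A y ∪ Xrow A (y - 1)).card
        = ∑ y ∈ sh (A.image Prod.snd),
            ((Xrow A (y - 1)).card + (Xrow A y \ Xrow A (y - 1)).card) :=
          Finset.sum_congr rfl fun y _ => Uy_card A y
      _ = A.card + (bottoms A).card := by
          rw [Finset.sum_add_distrib, sum_shift, sum_diff_eq_bottoms]
    
  have h3 : (A.image Prod.fst).card ≤ (bottoms A).card := by
    rw [← bottoms_image A]
    exact Finset.card_image_le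
  have h4 : (A.image Prod.snd).card + 1 ≤ (sh (A.image Prod.snd)).card :=
    card_sh_ge _ (rows_nonempty hA)
  have hsum : ∑ y ∈ sh (A.image Prod.snd), ((Xrow A y ∪ Xrow A (y - 1)).card + 1)
      ≤ ∑ y ∈ sh (A.image Prod.snd), (sh (Xrow A y ∪ Xrow A (y - 1))).card :=
    Finset.sum_le_sum step1
  have hall : ∑ y ∈ sh (A.image Prod.snd), ((Xrow A y ∪ Xrow A (y - 1)).card + 1)
      = ∑ y ∈ sh (A.image Prod.snd), (sh (Xrow A y ∪ Xrow A (y - 1))).card := by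
    omega
  refine ⟨by omega, ?_, by omega⟩
  intro y hy
  have := (Finset.sum_eq_sum_iff_of_le step1).mp hall y hy
  omega

end PolyProof

namespace PolyProof

def ColConvex (A : Finset Cell) : Prop :=
  ∀ x y1 y y2 : ℤ, (x, y1) ∈ A → (x, y2) ∈ A → y1 ≤ y → y ≤ y2 → (x, y) ∈ A

def RowConvex (A : Finset Cell) : Prop :=
  ∀ y x1 x x2 : ℤ, (x1, y) ∈ A → (x2, y) ∈ A → x1 ≤ x → x ≤ x2 → (x, y) ∈ A

lemma col_convex_of_bottoms (A : Finset Cell)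
    (hc : (bottoms A).card = (A.image Prod.fst).card) : ColConvex A := by
  have hinj : Set.InjOn Prod.fst (bottoms A : Set Cell) := by
    apply Finset.card_image_iff.mp
    rw [bottoms_image A, hc]
  intro x y1 y y2 h1 h2 hle1 hle2
  by_contra hnot
  have hy1 : y1 ≠ y := fun h => hnot (h ▸ h1)
  have hy2 : y2 ≠ y := fun h => hnot (h ▸ h2)
  set Yx := (A.filter (fun c => c.1 = x)).image Prod.snd with hYx
  have hmemY : ∀ z : ℤ, z ∈ Yx ↔ (x, z) ∈ A := by
    intro z
    rw [hYx]
    simp only [Finset.mem_image, Finset.mem_filter]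
    constructor
    · rintro ⟨⟨a, b⟩, ⟨hab, ha⟩, rfl⟩
      simp only at ha
      rwa [show ((x : ℤ), b) = (a, b) by rw [Prod.ext_iff]; exact ⟨ha.symm, rfl⟩]
    · intro h; exact ⟨(x, z), ⟨h, rfl⟩, rfl⟩
  have hne : Yx.Nonempty := ⟨y1, (hmemY y1).mpr h1⟩
  -- first bottom: the global min of the column
  set m1 := Yx.min' hne with hm1
  have hb1 : (x, m1) ∈ bottoms A := by
    rw [bottoms, Finset.mem_filter]
    refine ⟨(hmemY m1).mp (Yx.min'_mem hne), fun hc2 => ?_⟩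
    have := Yx.min'_le _ ((hmemY _).mpr hc2)
    omega
  -- second bottom: min of the part above y
  set Y2 := Yx.filter (fun z => y < z) with hY2
  have hne2 : Y2.Nonempty := ⟨y2, Finset.mem_filter.mpr ⟨(hmemY y2).mpr h2, by omega⟩⟩
  set m2 := Y2.min' hne2 with hm2
  have hm2mem : m2 ∈ Yx ∧ y < m2 := Finset.mem_filter.mp (Y2.min'_mem hne2)
  have hb2 : (x, m2) ∈ bottoms A := by
    rw [bottoms, Finset.mem_filter]
    refine ⟨(hmemY m2).mp hm2mem.1, fun hc2 => ?_⟩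
    have hy' : m2 - 1 ∈ Yx := (hmemY _).mpr hc2
    have hgt : y < m2 := hm2mem.2
    rcases eq_or_lt_of_le (show y ≤ m2 - 1 by omega) with h | h
    · exact hnot (by rwa [← h] at hc2)
    · have := Y2.min'_le _ (Finset.mem_filter.mpr ⟨hy', h⟩)
      omega
  have hmm : m1 < m2 := by
    have h1' := Yx.min'_le _ ((hmemY y1).mpr h1)
    have := hm2mem.2
    omega
  have : ((x : ℤ), m1) = (x, m2) := hinj hb1 hb2 rfl
  rw [Prod.ext_iff] at this
  simp only at this
  omega

lemma Uy_interval {A : Finset Cell} {y : ℤ} (hy : y ∈ sh (A.image Prod.snd))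
    (hU : (sh (Xrow A y ∪ Xrow A (y - 1))).card = (Xrow A y ∪ Xrow A (y - 1)).card + 1) :
    ∀ x1 x x2 : ℤ, x1 ∈ Xrow A y ∪ Xrow A (y - 1) → x2 ∈ Xrow A y ∪ Xrow A (y - 1) →
      x1 ≤ x → x ≤ x2 → x ∈ Xrow A y ∪ Xrow A (y - 1) := by
  intro x1 x x2 h1 h2 hle1 hle2
  have hne := Uy_nonempty hy
  have hIcc := sh_eq_of_card _ hne (le_of_eq hU)
  rw [hIcc] at h1 h2 ⊢
  rw [Finset.mem_Icc] at h1 h2 ⊢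
  omega

lemma row_convex_of (A : Finset Cell)
    (hU : ∀ y ∈ sh (A.image Prod.snd),
      (sh (Xrow A y ∪ Xrow A (y - 1))).card = (Xrow A y ∪ Xrow A (y - 1)).card + 1)
    (hcol : ColConvex A) : RowConvex A := by
  intro y x1 x x2 h1 h2 hle1 hle2
  by_contra hnot
  have hx1 : x1 ≠ x := fun h => hnot (h ▸ h1)
  have hx2 : x2 ≠ x := fun h => hnot (h ▸ h2)
  have hyrows : y ∈ A.image Prod.snd := mem_rowsOf.mpr ⟨x1, h1⟩
  -- upper interval U_{y+1} = X_{y+1} ∪ X_y contains x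
  have hy1 : y + 1 ∈ sh (A.image Prod.snd) := mem_sh.mpr (Or.inr (by simpa using hyrows))
  have hup : (x, y + 1) ∈ A := by
    have hXy : ∀ z : ℤ, z ∈ Xrow A (y + 1) ∪ Xrow A (y + 1 - 1) ↔
        (z, y + 1) ∈ A ∨ (z, y) ∈ A := by
      intro z
      rw [Finset.mem_union, mem_Xrow, mem_Xrow, show (y + 1 - 1 : ℤ) = y by ring]
    have hx := Uy_interval hy1 (hU _ hy1) x1 x x2
      ((hXy x1).mpr (Or.inr h1)) ((hXy x2).mpr (Or.inr h2)) hle1 hle2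
    rcases (hXy x).mp hx with h | h
    · exact h
    · exact absurd h hnot
  -- lower interval U_y = X_y ∪ X_{y-1} contains x
  have hy0 : y ∈ sh (A.image Prod.snd) := mem_sh.mpr (Or.inl hyrows)
  have hdown : (x, y - 1) ∈ A := by
    have hXy : ∀ z : ℤ, z ∈ Xrow A y ∪ Xrow A (y - 1) ↔
        (z, y) ∈ A ∨ (z, y - 1) ∈ A := by
      intro z
      rw [Finset.mem_union, mem_Xrow, mem_Xrow]
    have hx := Uy_interval hy0 (hU _ hy0) x1 x x2
      ((hXy x1).mpr (Or.inl h1)) ((hXy x2).mpr (Or.inl h2)) hle1 hle2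
    rcases (hXy x).mp hx with h | h
    · exact absurd h hnot
    · exact h
  exact hnot (hcol x (y - 1) y (y + 1) hdown hup (by omega) (by omega))

end PolyProof

namespace PolyProof

lemma sum_nbrs {M : Type*} [AddCommMonoid M] (c : Cell) (f : Cell → M) :
    ∑ d ∈ nbrs c, f d
      = f (c.1 + 1, c.2) + f (c.1 - 1, c.2) + f (c.1, c.2 + 1) + f (c.1, c.2 - 1) := by
  have e : nbrs c
      = insert (c.1 + 1, c.2) (insert (c.1 - 1, c.2) (insert (c.1, c.2 + 1) {(c.1, c.2 - 1)})) :=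
    rfl
  rw [e, Finset.sum_insert (by simp [Prod.ext_iff] <;> omega),
    Finset.sum_insert (by simp [Prod.ext_iff] <;> omega),
    Finset.sum_insert (by simp [Prod.ext_iff] <;> omega), Finset.sum_singleton]
  simp only [add_assoc]

lemma perim_split (A : Finset Cell) :
    perim A = (A.filter (fun c => (c.1 + 1, c.2) ∉ A)).card
      + (A.filter (fun c => (c.1 - 1, c.2) ∉ A)).card
      + (A.filter (fun c => (c.1, c.2 + 1) ∉ A)).card
      + (A.filter (fun c => (c.1, c.2 - 1) ∉ A)).card := by
  have h1 : ∀ c : Cell, ((nbrs c).filter (fun d => d ∉ A)).card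
      = ((if (c.1 + 1, c.2) ∉ A then 1 else 0) + (if (c.1 - 1, c.2) ∉ A then 1 else 0))
        + ((if (c.1, c.2 + 1) ∉ A then 1 else 0) + (if (c.1, c.2 - 1) ∉ A then 1 else 0)) := by
    intro c
    rw [Finset.card_filter, sum_nbrs]
    ring
  rw [perim]
  rw [Finset.sum_congr rfl (fun c _ => h1 c), Finset.sum_add_distrib, Finset.sum_add_distrib,
    Finset.sum_add_distrib,
    ← Finset.card_filter, ← Finset.card_filter, ← Finset.card_filter, ← Finset.card_filter]
  ring

lemma dir_image_right (A : Finset Cell) :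
    (A.filter (fun c => (c.1 + 1, c.2) ∉ A)).image Prod.snd = A.image Prod.snd := by
  apply Finset.Subset.antisymm (Finset.image_subset_image (Finset.filter_subset _ _))
  intro y hy
  obtain ⟨x0, hx0⟩ := mem_rowsOf.mp hy
  have hne : (Xrow A y).Nonempty := ⟨x0, mem_Xrow.mpr hx0⟩
  set m := (Xrow A y).max' hne with hm
  refine mem_rowsOf.mpr ⟨m, Finset.mem_filter.mpr ⟨mem_Xrow.mp ((Xrow A y).max'_mem hne), ?_⟩⟩
  intro hc
  have := (Xrow A y).le_max' _ (mem_Xrow.mpr hc)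
  omega

lemma dir_image_left (A : Finset Cell) :
    (A.filter (fun c => (c.1 - 1, c.2) ∉ A)).image Prod.snd = A.image Prod.snd := by
  apply Finset.Subset.antisymm (Finset.image_subset_image (Finset.filter_subset _ _))
  intro y hy
  obtain ⟨x0, hx0⟩ := mem_rowsOf.mp hy
  have hne : (Xrow A y).Nonempty := ⟨x0, mem_Xrow.mpr hx0⟩
  set m := (Xrow A y).min' hne with hm
  refine mem_rowsOf.mpr ⟨m, Finset.mem_filter.mpr ⟨mem_Xrow.mp ((Xrow A y).min'_mem hne), ?_⟩⟩
  intro hc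
  have := (Xrow A y).min'_le _ (mem_Xrow.mpr hc)
  omega

def Ycol (A : Finset Cell) (x : ℤ) : Finset ℤ := (A.filter (fun c => c.1 = x)).image Prod.snd

lemma mem_Ycol {A : Finset Cell} {x y : ℤ} : y ∈ Ycol A x ↔ (x, y) ∈ A := by
  simp only [Ycol, Finset.mem_image, Finset.mem_filter]
  constructor
  · rintro ⟨⟨a, b⟩, ⟨hab, ha⟩, rfl⟩
    simp only at ha
    rwa [show ((x : ℤ), b) = (a, b) by rw [Prod.ext_iff]; exact ⟨ha.symm, rfl⟩]
  · intro h; exact ⟨(x, y), ⟨h, rfl⟩, rfl⟩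

lemma dir_image_up (A : Finset Cell) :
    (A.filter (fun c => (c.1, c.2 + 1) ∉ A)).image Prod.fst = A.image Prod.fst := by
  apply Finset.Subset.antisymm (Finset.image_subset_image (Finset.filter_subset _ _))
  intro x hx
  obtain ⟨y0, hy0⟩ := mem_colsOf.mp hx
  have hne : (Ycol A x).Nonempty := ⟨y0, mem_Ycol.mpr hy0⟩
  set m := (Ycol A x).max' hne with hm
  refine mem_colsOf.mpr ⟨m, Finset.mem_filter.mpr ⟨mem_Ycol.mp ((Ycol A x).max'_mem hne), ?_⟩⟩
  intro hc
  have := (Ycol A x).le_max' _ (mem_Ycol.mpr hc)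
  omega

lemma dir_image_down (A : Finset Cell) :
    (A.filter (fun c => (c.1, c.2 - 1) ∉ A)).image Prod.fst = A.image Prod.fst := by
  apply Finset.Subset.antisymm (Finset.image_subset_image (Finset.filter_subset _ _))
  intro x hx
  obtain ⟨y0, hy0⟩ := mem_colsOf.mp hx
  have hne : (Ycol A x).Nonempty := ⟨y0, mem_Ycol.mpr hy0⟩
  set m := (Ycol A x).min' hne with hm
  refine mem_colsOf.mpr ⟨m, Finset.mem_filter.mpr ⟨mem_Ycol.mp ((Ycol A x).min'_mem hne), ?_⟩⟩
  intro hc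
  have := (Ycol A x).min'_le _ (mem_Ycol.mpr hc)
  omega

lemma perim_ge (A : Finset Cell) :
    2 * ((A.image Prod.snd).card + (A.image Prod.fst).card) ≤ perim A := by
  rw [perim_split]
  have h1 : (A.image Prod.snd).card ≤ (A.filter (fun c : Cell => (c.1 + 1, c.2) ∉ A)).card := by
    rw [← dir_image_right A]; exact Finset.card_image_le
  have h2 : (A.image Prod.snd).card ≤ (A.filter (fun c : Cell => (c.1 - 1, c.2) ∉ A)).card := by
    rw [← dir_image_left A]; exact Finset.card_image_le
  have h3 : (A.image Prod.fst).card ≤ (A.filter (fun c : Cell => (c.1, c.2 + 1) ∉ A)).card := by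
    rw [← dir_image_up A]; exact Finset.card_image_le
  have h4 : (A.image Prod.fst).card ≤ (A.filter (fun c : Cell => (c.1, c.2 - 1) ∉ A)).card := by
    rw [← dir_image_down A]; exact Finset.card_image_le
  omega

lemma perim_eq_of_convex (A : Finset Cell) (hrow : RowConvex A) (hcol : ColConvex A) :
    perim A = 2 * ((A.image Prod.snd).card + (A.image Prod.fst).card) := by
  rw [perim_split]
  have h1 : (A.filter (fun c => (c.1 + 1, c.2) ∉ A)).card = (A.image Prod.snd).card := by
    rw [← dir_image_right A]
    refine (Finset.card_image_of_injOn ?_).symm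
    rintro ⟨a, b⟩ ha ⟨a', b'⟩ hb h
    simp only [Finset.coe_filter, Set.mem_setOf_eq] at ha hb
    simp only at h
    subst h
    rcases lt_trichotomy a a' with hlt | heq | hlt
    · exact absurd (hrow b a (a + 1) a' ha.1 hb.1 (by omega) (by omega)) ha.2
    · rw [heq]
    · exact absurd (hrow b a' (a' + 1) a hb.1 ha.1 (by omega) (by omega)) hb.2
  have h2 : (A.filter (fun c => (c.1 - 1, c.2) ∉ A)).card = (A.image Prod.snd).card := by
    rw [← dir_image_left A]
    refine (Finset.card_image_of_injOn ?_).symm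
    rintro ⟨a, b⟩ ha ⟨a', b'⟩ hb h
    simp only [Finset.coe_filter, Set.mem_setOf_eq] at ha hb
    simp only at h
    subst h
    rcases lt_trichotomy a a' with hlt | heq | hlt
    · exact absurd (hrow b a (a' - 1) a' ha.1 hb.1 (by omega) (by omega)) hb.2
    · rw [heq]
    · exact absurd (hrow b a' (a - 1) a hb.1 ha.1 (by omega) (by omega)) ha.2
  have h3 : (A.filter (fun c => (c.1, c.2 + 1) ∉ A)).card = (A.image Prod.fst).card := by
    rw [← dir_image_up A]
    refine (Finset.card_image_of_injOn ?_).symm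
    rintro ⟨a, b⟩ ha ⟨a', b'⟩ hb h
    simp only [Finset.coe_filter, Set.mem_setOf_eq] at ha hb
    simp only at h
    subst h
    rcases lt_trichotomy b b' with hlt | heq | hlt
    · exact absurd (hcol a b (b + 1) b' ha.1 hb.1 (by omega) (by omega)) ha.2
    · rw [heq]
    · exact absurd (hcol a b' (b' + 1) b hb.1 ha.1 (by omega) (by omega)) hb.2
  have h4 : (A.filter (fun c => (c.1, c.2 - 1) ∉ A)).card = (A.image Prod.fst).card := by
    rw [← dir_image_down A]
    refine (Finset.card_image_of_injOn ?_).symm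
    rintro ⟨a, b⟩ ha ⟨a', b'⟩ hb h
    simp only [Finset.coe_filter, Set.mem_setOf_eq] at ha hb
    simp only at h
    subst h
    rcases lt_trichotomy b b' with hlt | heq | hlt
    · exact absurd (hcol a b (b' - 1) b' ha.1 hb.1 (by omega) (by omega)) hb.2
    · rw [heq]
    · exact absurd (hcol a b' (b - 1) b hb.1 ha.1 (by omega) (by omega)) ha.2
  omega

end PolyProof

namespace PolyProof

lemma adjIn_symm {A : Finset Cell} : Symmetric (adjIn A) :=
  fun _ _ h => ⟨h.2.1, h.1, adj_symm h.2.2⟩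

lemma rtg_symm {A : Finset Cell} {p q : Cell} (h : Relation.ReflTransGen (adjIn A) p q) :
    Relation.ReflTransGen (adjIn A) q p :=
  (@Relation.ReflTransGen.symmetric _ _ ⟨adjIn_symm⟩).symm _ _ h

lemma row_path {A : Finset Cell} (hrow : RowConvex A) {y x1 x2 : ℤ}
    (h1 : (x1, y) ∈ A) (h2 : (x2, y) ∈ A) :
    Relation.ReflTransGen (adjIn A) (x1, y) (x2, y) := by
  have key : ∀ xa xb : ℤ, xa ≤ xb → (xa, y) ∈ A → (xb, y) ∈ A →
      Relation.ReflTransGen (adjIn A) (xa, y) (xb, y) := by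
    intro xa
    refine Int.le_induction ?_ ?_
    · intro _ _; exact Relation.ReflTransGen.refl
    · intro b hb ih ha hb1
      have hbmem : (b, y) ∈ A := hrow y xa b (b + 1) ha hb1 hb (by omega)
      refine Relation.ReflTransGen.tail (ih ha hbmem) ?_
      refine ⟨hbmem, hb1, ?_⟩
      have := adj_horiz b y
      simpa using this
  rcases le_total x1 x2 with h | h
  · exact key x1 x2 h h1 h2
  · exact rtg_symm (key x2 x1 h h2 h1)

lemma conn_of (A : Finset Cell) (hrow : RowConvex A)
    (hIcc : ∀ ya yb yc : ℤ, ya ∈ A.image Prod.snd → yc ∈ A.image Prod.snd →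
      ya ≤ yb → yb ≤ yc → yb ∈ A.image Prod.snd)
    (hoverlap : ∀ y : ℤ, y ∈ A.image Prod.snd → (y + 1) ∈ A.image Prod.snd →
      ∃ x, (x, y) ∈ A ∧ (x, y + 1) ∈ A) :
    ∀ p ∈ A, ∀ q ∈ A, Relation.ReflTransGen (adjIn A) p q := by
  have key : ∀ d : ℕ, ∀ p q : Cell, p ∈ A → q ∈ A → q.2 = p.2 + (d : ℤ) →
      Relation.ReflTransGen (adjIn A) p q := by
    intro d
    induction d with
    | zero =>
      rintro ⟨px, py⟩ ⟨qx, qy⟩ hp hq hd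
      simp only at hd
      norm_num at hd
      subst hd
      exact row_path hrow hp hq
    | succ d ih =>
      rintro ⟨px, py⟩ ⟨qx, qy⟩ hp hq hd
      simp only at hd
      have hpy : py ∈ A.image Prod.snd := mem_rowsOf.mpr ⟨px, hp⟩
      have hqy : qy ∈ A.image Prod.snd := mem_rowsOf.mpr ⟨qx, hq⟩
      have hpy1 : py + 1 ∈ A.image Prod.snd :=
        hIcc py (py + 1) qy hpy hqy (by omega) (by push_cast at hd; omega)
      obtain ⟨x, hx0, hx1⟩ := hoverlap py hpy hpy1
      have step1 : Relation.ReflTransGen (adjIn A) (px, py) (x, py) := row_path hrow hp hx0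
      have step2 : Relation.ReflTransGen (adjIn A) (x, py) (x, py + 1) := by
        refine Relation.ReflTransGen.single ⟨hx0, hx1, ?_⟩
        have := adj_vert x py
        simpa using this
      have step3 : Relation.ReflTransGen (adjIn A) (x, py + 1) (qx, qy) := by
        refine ih (x, py + 1) (qx, qy) hx1 hq ?_
        simp only
        push_cast at hd ⊢
        omega
      exact (step1.trans step2).trans step3
  intro p hp q hq
  rcases le_total p.2 q.2 with h | h
  · exact key (q.2 - p.2).toNat p q hp hq (by omega)
  · exact rtg_symm (key (p.2 - q.2).toNat q p hq hp (by omega))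

lemma card_le_mul (S : Finset Cell) :
    S.card ≤ (S.image Prod.fst).card * (S.image Prod.snd).card := by
  calc S.card ≤ ((S.image Prod.fst) ×ˢ (S.image Prod.snd)).card := by
        refine Finset.card_le_card fun c hc => ?_
        exact Finset.mem_product.mpr ⟨Finset.mem_image_of_mem _ hc, Finset.mem_image_of_mem _ hc⟩
    _ = (S.image Prod.fst).card * (S.image Prod.snd).card := Finset.card_product _ _

lemma amgm (a b : ℤ) : 4 * (a * b) ≤ (a + b) ^ 2 := by nlinarith [sq_nonneg (a - b)]

lemma arith_split {p q : ℕ} {a b : ℤ} (ha : 2 ≤ a) (hb : 2 ≤ b)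
    (h1 : 4 * (p : ℤ) ≤ a ^ 2) (h2 : 4 * (q : ℤ) ≤ b ^ 2) :
    4 * ((p : ℤ) + q) ≤ (a + b - 1) ^ 2 := by nlinarith [mul_le_mul ha hb (by omega) (by omega)]

end PolyProof

namespace PolyProof

def ofs (a : ℤ) : ℤ := if a = 1 then 0 else 1

def Fmap (a b : ℤ) (sw : Bool) (t : Cell) : Cell → Cell :=
  fun c => if sw then (a * c.2 + t.1, b * c.1 + t.2) else (a * c.1 + t.1, b * c.2 + t.2)

def Hmap (a b : ℤ) (sw : Bool) (t : Cell) : Cell → Cell :=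
  fun v => if sw then (a * v.2 + t.1 + ofs a, b * v.1 + t.2 + ofs b)
    else (a * v.1 + t.1 + ofs a, b * v.2 + t.2 + ofs b)

lemma corners_Fmap {a b : ℤ} (ha : a = 1 ∨ a = -1) (hb : b = 1 ∨ b = -1) (sw : Bool)
    (t : Cell) (c : Cell) :
    corners (Fmap a b sw t c) = (corners c).image (Hmap a b sw t) := by
  rcases ha with rfl | rfl <;> rcases hb with rfl | rfl <;> cases sw <;>
    (ext v;
     simp only [corners, Fmap, Hmap, ofs, Finset.image_insert, Finset.image_singleton,
       Finset.mem_insert, Finset.mem_singleton, Prod.ext_iff, if_true, if_false,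
       Bool.false_eq_true, reduceIte, one_mul, neg_one_mul] <;>
     norm_num <;> omega)

lemma vertexSet_biUnion (S : Finset Cell) : vertexSet S = S.biUnion corners := rfl

lemma vertexSet_image {a b : ℤ} (ha : a = 1 ∨ a = -1) (hb : b = 1 ∨ b = -1) (sw : Bool)
    (t : Cell) (X : Finset Cell) :
    vertexSet (X.image (Fmap a b sw t)) = (vertexSet X).image (Hmap a b sw t) := by
  rw [vertexSet_biUnion, vertexSet_biUnion]
  ext v
  simp only [Finset.mem_biUnion, Finset.mem_image]
  constructor
  · rintro ⟨c', ⟨c, hc, rfl⟩, hv⟩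
    rw [corners_Fmap ha hb] at hv
    obtain ⟨w, hw, rfl⟩ := Finset.mem_image.mp hv
    exact ⟨w, ⟨c, hc, hw⟩, rfl⟩
  · rintro ⟨w, ⟨c, hc, hw⟩, rfl⟩
    refine ⟨Fmap a b sw t c, ⟨c, hc, rfl⟩, ?_⟩
    rw [corners_Fmap ha hb]
    exact Finset.mem_image_of_mem _ hw

lemma Fmap_inj {a b : ℤ} (ha : a = 1 ∨ a = -1) (hb : b = 1 ∨ b = -1) (sw : Bool) (t : Cell) :
    Function.Injective (Fmap a b sw t) := by
  rcases ha with rfl | rfl <;> rcases hb with rfl | rfl <;> cases sw <;>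
    (intro v w h;
     simp only [Fmap, Prod.ext_iff, if_true, if_false, Bool.false_eq_true, reduceIte] at h;
     rw [Prod.ext_iff]; omega)

lemma Hmap_inj {a b : ℤ} (ha : a = 1 ∨ a = -1) (hb : b = 1 ∨ b = -1) (sw : Bool) (t : Cell) :
    Function.Injective (Hmap a b sw t) := by
  rcases ha with rfl | rfl <;> rcases hb with rfl | rfl <;> cases sw <;>
    (intro v w h;
     simp only [Hmap, ofs, Prod.ext_iff, if_true, if_false, Bool.false_eq_true, reduceIte] at h;
     rw [Prod.ext_iff]; omega)

lemma dihedral_eq {f : Cell → Cell} (hf : f ∈ dihedralMaps) (t : Cell) :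
    ∃ a b : ℤ, ∃ sw : Bool, (a = 1 ∨ a = -1) ∧ (b = 1 ∨ b = -1) ∧
      (fun c : Cell => (((f c).1 + t.1, (f c).2 + t.2) : Cell)) = Fmap a b sw t := by
  simp only [dihedralMaps, List.mem_cons, List.mem_singleton, List.not_mem_nil, or_false]
    at hf
  rcases hf with rfl | rfl | rfl | rfl | rfl | rfl | rfl | rfl
  · exact ⟨1, 1, false, Or.inl rfl, Or.inl rfl, by funext c; simp [Fmap]⟩
  · exact ⟨-1, 1, false, Or.inr rfl, Or.inl rfl, by funext c; simp [Fmap]⟩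
  · exact ⟨1, -1, false, Or.inl rfl, Or.inr rfl, by funext c; simp [Fmap]⟩
  · exact ⟨-1, -1, false, Or.inr rfl, Or.inr rfl, by funext c; simp [Fmap]⟩
  · exact ⟨1, 1, true, Or.inl rfl, Or.inl rfl, by funext c; simp [Fmap]⟩
  · exact ⟨-1, 1, true, Or.inr rfl, Or.inl rfl, by funext c; simp [Fmap]⟩
  · exact ⟨1, -1, true, Or.inl rfl, Or.inr rfl, by funext c; simp [Fmap]⟩
  · exact ⟨-1, -1, true, Or.inr rfl, Or.inr rfl, by funext c; simp [Fmap]⟩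

end PolyProof

namespace PolyProof

lemma mem_baseStd {l ζ a k : ℕ} {x y : ℤ} :
    (x, y) ∈ baseStd l ζ a k ↔
      (0 ≤ x ∧ x < (l : ℤ) + ζ ∧ 0 ≤ y ∧ y < l) ∨ ((a : ℤ) ≤ x ∧ x < (a : ℤ) + k ∧ y = l) := by
  simp only [baseStd, Finset.mem_union, Finset.mem_image, Finset.mem_product,
    Finset.mem_range, Prod.ext_iff]
  constructor
  · rintro (⟨⟨i, j⟩, ⟨hi, hj⟩, hx, hy⟩ | ⟨i, hi, hx, hy⟩)
    · simp only at hx hy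
      left; omega
    · right; omega
  · rintro (⟨h1, h2, h3, h4⟩ | ⟨h1, h2, h3⟩)
    · exact Or.inl ⟨(x.toNat, y.toNat), ⟨by omega, by omega⟩, by simp; omega, by simp; omega⟩
    · exact Or.inr ⟨(x - a).toNat, by omega, by push_cast; omega, by omega⟩

lemma card_baseStd (l ζ a k : ℕ) (hak : a + k ≤ l + ζ) :
    (baseStd l ζ a k).card = l * (l + ζ) + k := by
  rw [baseStd, Finset.card_union_of_disjoint]
  · rw [Finset.card_image_of_injective _ (fun p q h => by
        simp only [Prod.ext_iff] at h; rw [Prod.ext_iff]; exact_mod_cast h),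
      Finset.card_image_of_injective _ (fun p q h => by
        simp only [Prod.ext_iff] at h; omega),
      Finset.card_product, Finset.card_range, Finset.card_range, Finset.card_range]
    ring
  · rw [Finset.disjoint_left]
    rintro ⟨x, y⟩ h1 h2
    simp only [Finset.mem_image, Finset.mem_product, Finset.mem_range, Prod.ext_iff] at h1 h2
    obtain ⟨⟨i, j⟩, ⟨hi, hj⟩, hx, hy⟩ := h1
    obtain ⟨i', hi', hx', hy'⟩ := h2
    simp only at hx hy
    omega

lemma vs_baseStd_zero (l ζ a : ℕ) (hl : 1 ≤ l) (hζ : ζ ≤ 1) :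
    (vertexSet (baseStd l ζ a 0)).card = (l + ζ + 1) * (l + 1) := by
  have he : vertexSet (baseStd l ζ a 0)
      = Finset.Icc (0 : ℤ) ((l : ℤ) + ζ) ×ˢ Finset.Icc (0 : ℤ) (l : ℤ) := by
    ext ⟨x, y⟩
    rw [mem_vertexSet']
    simp only [mem_baseStd, Finset.mem_product, Finset.mem_Icc]
    push_cast
    omega
  rw [he, Finset.card_product, Int.card_Icc, Int.card_Icc,
    show ((l : ℤ) + ζ + 1 - 0).toNat = l + ζ + 1 by omega,
    show ((l : ℤ) + 1 - 0).toNat = l + 1 by omega]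

lemma vs_baseStd_pos (l ζ a k : ℕ) (hl : 1 ≤ l) (hζ : ζ ≤ 1) (hk : 1 ≤ k)
    (hak : a + k ≤ l + ζ) :
    (vertexSet (baseStd l ζ a k)).card = (l + ζ + 1) * (l + 1) + (k + 1) := by
  have he : vertexSet (baseStd l ζ a k)
      = Finset.Icc (0 : ℤ) ((l : ℤ) + ζ) ×ˢ Finset.Icc (0 : ℤ) (l : ℤ)
        ∪ Finset.Icc (a : ℤ) ((a : ℤ) + k) ×ˢ Finset.Icc ((l : ℤ) + 1) ((l : ℤ) + 1) := by
    ext ⟨x, y⟩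
    rw [mem_vertexSet']
    simp only [mem_baseStd, Finset.mem_union, Finset.mem_product, Finset.mem_Icc]
    push_cast
    omega
  rw [he, Finset.card_union_of_disjoint]
  · rw [Finset.card_product, Finset.card_product, Int.card_Icc, Int.card_Icc, Int.card_Icc,
      Int.card_Icc,
      show ((l : ℤ) + ζ + 1 - 0).toNat = l + ζ + 1 by omega,
      show ((l : ℤ) + 1 - 0).toNat = l + 1 by omega,
      show ((a : ℤ) + k + 1 - a).toNat = k + 1 by omega,
      show ((l : ℤ) + 1 + 1 - (l + 1)).toNat = 1 by omega, mul_one]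
  · rw [Finset.disjoint_left]
    rintro ⟨x, y⟩ h1 h2
    simp only [Finset.mem_product, Finset.mem_Icc] at h1 h2
    omega

end PolyProof

namespace PolyProof

lemma Tpoly_ge (B : Finset Cell) (hB : B.Nonempty) :
    4 * ((B.image Prod.fst).card + (B.image Prod.snd).card + 1 : ℤ) ≤ Tpoly B := by
  rw [Tpoly_eq_card]
  have := main_lower B hB
  have hcast : (B.card : ℤ) + (B.image Prod.fst).card + (B.image Prod.snd).card + 1
      ≤ ((vertexSet B).card : ℤ) := by exact_mod_cast this
  linarith

lemma sum_ge_K {n c r : ℕ} {K : ℤ} (hlow : (K - 1) ^ 2 < 4 * (n : ℤ)) (hcr : n ≤ c * r) :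
    K ≤ (c : ℤ) + (r : ℤ) := by
  by_contra h
  push_neg at h
  have h1 : (c : ℤ) + r ≤ K - 1 := by omega
  have h2 : ((c : ℤ) + r) * ((c : ℤ) + r) ≤ (K - 1) * (K - 1) :=
    mul_le_mul h1 h1 (by positivity) (le_trans (by positivity) h1)
  have h3 : 4 * ((c : ℤ) * r) ≤ ((c : ℤ) + r) ^ 2 := amgm _ _
  have h4 : (n : ℤ) ≤ (c : ℤ) * r := by exact_mod_cast hcr
  nlinarith

/-- All data about a standard polyomino: its cardinality n, and a value K with
|VS| = n + K + 1, K² ≥ 4n, (K-1)² < 4n. -/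
lemma std_facts {A : Finset Cell} (hstd : IsStandardPoly A) :
    1 ≤ A.card ∧ ∃ K : ℤ, 1 ≤ K ∧
      ((vertexSet A).card : ℤ) = A.card + K + 1 ∧
      4 * (A.card : ℤ) ≤ K ^ 2 ∧ (K - 1) ^ 2 < 4 * (A.card : ℤ) := by
  obtain ⟨l, ζ, a, k, hl, hζ, hak, f, hf, t, hA⟩ := hstd
  obtain ⟨α, β, sw, hα, hβ, hFeq⟩ := dihedral_eq hf t
  rw [hFeq] at hA
  have hcard : A.card = l * (l + ζ) + k := by
    rw [hA, Finset.card_image_of_injective _ (Fmap_inj hα hβ sw t), card_baseStd _ _ _ _ hak]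
  have hvs : (vertexSet A).card = (vertexSet (baseStd l ζ a k)).card := by
    rw [hA, vertexSet_image hα hβ sw t,
      Finset.card_image_of_injective _ (Hmap_inj hα hβ sw t)]
  have hn1 : 1 ≤ A.card := by
    rw [hcard]
    have : 1 ≤ l * (l + ζ) := Nat.one_le_iff_ne_zero.mpr (Nat.mul_ne_zero (by omega) (by omega))
    omega
  refine ⟨hn1, ?_⟩
  rcases Nat.eq_zero_or_pos k with hk | hk
  · subst hk
    refine ⟨2 * l + ζ, by omega, ?_, ?_, ?_⟩
    · rw [hvs, vs_baseStd_zero l ζ a hl hζ, hcard]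
      push_cast
      ring
    · rw [hcard]
      push_cast
      nlinarith
    · rw [hcard]
      push_cast
      rcases Nat.le_one_iff_eq_zero_or_eq_one.mp hζ with h0 | h1
      · subst h0; push_cast; nlinarith [hl]
      · subst h1; push_cast; nlinarith [hl]
  · refine ⟨2 * l + ζ + 1, by omega, ?_, ?_, ?_⟩
    · rw [hvs, vs_baseStd_pos l ζ a k hl hζ hk hak, hcard]
      push_cast
      ring
    · rw [hcard]
      rcases Nat.le_one_iff_eq_zero_or_eq_one.mp hζ with h0 | h1
      · subst h0
        push_cast
        have : k ≤ l := by omega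
        nlinarith [this]
      · subst h1
        push_cast
        have : k ≤ l + 1 := by omega
        nlinarith [this]
    · rw [hcard]
      push_cast
      nlinarith [hk]

/-- Clause 2: standard polyominoes minimise T. -/
lemma std_minimizer {A : Finset Cell} (hstd : IsStandardPoly A) :
    ∀ B : Finset Cell, B.card = A.card → Tpoly A ≤ Tpoly B := by
  obtain ⟨hn1, K, hK1, hvs, hup, hlow⟩ := std_facts hstd
  intro B hB
  have hBne : B.Nonempty := by
    rw [← Finset.card_pos, hB]
    omega
  have hTB := Tpoly_ge B hBne
  have hcr : B.card ≤ (B.image Prod.fst).card * (B.image Prod.snd).card := card_le_mul B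
  rw [hB] at hcr
  have hKle : K ≤ ((B.image Prod.fst).card : ℤ) + ((B.image Prod.snd).card : ℤ) :=
    sum_ge_K hlow hcr
  have hTA : Tpoly A = 4 * (K + 1) := by
    rw [Tpoly_eq_card, hvs]
    ring
  rw [hTA]
  linarith

end PolyProof

namespace PolyProof

lemma exists_std_card (n : ℕ) (hn : 0 < n) : ∃ A : Finset Cell, A.card = n ∧ IsStandardPoly A := by
  set l := n.sqrt with hl
  have h1 : l * l ≤ n := by simpa [pow_two] using Nat.sqrt_le' n
  have h2 : n < (l + 1) * (l + 1) := by
    have := Nat.lt_succ_sqrt' n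
    simpa [pow_two, Nat.succ_eq_add_one] using this
  have e0 : l * (l + 0) = l * l := by ring
  have e1 : l * (l + 1) = l * l + l := by ring
  have e2 : (l + 1) * (l + 1) = l * l + 2 * l + 1 := by ring
  have hl1 : 1 ≤ l := by
    by_contra h
    push_neg at h
    interval_cases l <;> omega
  have hid : (fun c : Cell => (c.1, c.2)) ∈ dihedralMaps := by simp [dihedralMaps]
  have hfun : (fun c : Cell => (((fun c : Cell => (c.1, c.2)) c).1 + (0 : ℤ),
      ((fun c : Cell => (c.1, c.2)) c).2 + (0 : ℤ))) = id := by
    funext c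
    simp [Prod.ext_iff]
  by_cases hcase : n ≤ l * l + l
  · refine ⟨baseStd l 0 0 (n - l * l), ?_, l, 0, 0, n - l * l, hl1, by omega,
      by omega, _, hid, (0, 0), ?_⟩
    · rw [card_baseStd _ _ _ _ (by omega)]
      omega
    · rw [hfun, Finset.image_id]
  · refine ⟨baseStd l 1 0 (n - l * l - l), ?_, l, 1, 0, n - l * l - l, hl1, le_refl 1,
      by omega, _, hid, (0, 0), ?_⟩
    · rw [card_baseStd _ _ _ _ (by omega)]
      omega
    · rw [hfun, Finset.image_id]

lemma path_cols {A : Finset Cell} {p q : Cell}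
    (h : Relation.ReflTransGen (adjIn A) p q) (hp : p ∈ A) :
    ∀ x : ℤ, p.1 ≤ x → x ≤ q.1 → ∃ y, (x, y) ∈ A := by
  induction h with
  | refl =>
    intro x h1 h2
    have hx : x = p.1 := le_antisymm h2 h1
    subst hx
    exact ⟨p.2, by simpa using hp⟩
  | @tail b c h' step ih =>
    intro x h1 h2
    obtain ⟨hbA, hcA, hadj⟩ := step
    by_cases hx : x ≤ b.1
    · exact ih x h1 hx
    · push_neg at hx
      have hca : c.1 ≤ b.1 + 1 := by
        rcases adjacent_iff.mp hadj with h | h | h | h <;> subst h <;> simp <;> omega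
      have hxc : x = c.1 := by omega
      subst hxc
      exact ⟨c.2, by simpa using hcA⟩

lemma max_unbot' {S : Finset ℤ} (hS : S.Nonempty) : WithBot.unbotD 0 S.max = S.max' hS := by
  rw [← Finset.coe_max' hS]
  rfl

lemma min_untop' {S : Finset ℤ} (hS : S.Nonempty) : WithTop.untopD 0 S.min = S.min' hS := by
  rw [← Finset.coe_min' hS]
  rfl

end PolyProof

namespace PolyProof

set_option maxHeartbeats 2000000 in
lemma minimizer_props (n : ℕ) (hn : 0 < n) (A : Finset Cell) (hcard : A.card = n)
    (hmin : ∀ B : Finset Cell, B.card = n → Tpoly A ≤ Tpoly B) :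
    PolyConnected A ∧ MonotonePoly A ∧ ∀ B : Finset Cell, B.card = n → perim A ≤ perim B := by
  obtain ⟨S, hScard, hSstd⟩ := exists_std_card n hn
  obtain ⟨hn1, K, hK1, hvsS, hup, hlow⟩ := std_facts hSstd
  rw [hScard] at hvsS hup hlow
  have hAne : A.Nonempty := Finset.card_pos.mp (by omega)
  set r := (A.image Prod.snd).card with hr
  set s := (A.image Prod.fst).card with hs
  -- upper bound on Tpoly A from the standard polyomino
  have hTA_le : Tpoly A ≤ 4 * (K + 1) := by
    have := hmin S hScard
    have hTS : Tpoly S = 4 * (K + 1) := by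
      rw [Tpoly_eq_card, hScard, hvsS]; ring
    omega
  -- lower bound
  have hlow1 : (n : ℤ) + s + r + 1 ≤ ((vertexSet A).card : ℤ) := by
    have := main_lower A hAne
    rw [hcard] at this
    exact_mod_cast this
  have hKsr : K ≤ (s : ℤ) + r := by
    have hcr : n ≤ s * r := by
      rw [← hcard]
      exact card_le_mul A
    exact sum_ge_K hlow hcr
  have hTA_eq : ((vertexSet A).card : ℤ) = n + s + r + 1 ∧ (s : ℤ) + r = K := by
    have hT : Tpoly A = 4 * (((vertexSet A).card : ℤ) - n) := by
      rw [Tpoly_eq_card, hcard]; ring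
    constructor <;> omega
  have hVSnat : (vertexSet A).card = A.card + (A.image Prod.fst).card
      + (A.image Prod.snd).card + 1 := by
    have := hTA_eq.1
    rw [← hcard] at this
    exact_mod_cast this
  obtain ⟨hsh, hU, hbot⟩ := main_equality A hAne hVSnat
  have hcol : ColConvex A := col_convex_of_bottoms A hbot
  have hrow : RowConvex A := row_convex_of A hU hcol
  have hrowsne := rows_nonempty hAne
  have hrowsIcc := sh_eq_of_card (A.image Prod.snd) hrowsne (le_of_eq hsh)
  have hIcc : ∀ ya yb yc : ℤ, ya ∈ A.image Prod.snd → yc ∈ A.image Prod.snd →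
      ya ≤ yb → yb ≤ yc → yb ∈ A.image Prod.snd := by
    intro ya yb yc h1 h2 h3 h4
    rw [hrowsIcc] at h1 h2 ⊢
    rw [Finset.mem_Icc] at h1 h2 ⊢
    omega
  -- the overlap property, by contradiction using minimality of r + s
  have hoverlap : ∀ y : ℤ, y ∈ A.image Prod.snd → (y + 1) ∈ A.image Prod.snd →
      ∃ x, (x, y) ∈ A ∧ (x, y + 1) ∈ A := by
    intro y hy hy1
    by_contra hno
    push_neg at hno
    set B := A.filter (fun c => c.2 ≤ y) with hB
    set C := A.filter (fun c => ¬ c.2 ≤ y) with hC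
    have hcards : B.card + C.card = n := by
      rw [hB, hC, Finset.card_filter_add_card_filter_not, hcard]
    have hrowsB : B.image Prod.snd = (A.image Prod.snd).filter (fun z => z ≤ y) := by
      ext z
      rw [mem_rowsOf, Finset.mem_filter, mem_rowsOf]
      constructor
      · rintro ⟨x, hx⟩
        rw [hB, Finset.mem_filter] at hx
        exact ⟨⟨x, hx.1⟩, hx.2⟩
      · rintro ⟨⟨x, hx⟩, hz⟩
        exact ⟨x, Finset.mem_filter.mpr ⟨hx, hz⟩⟩
    have hrowsC : C.image Prod.snd = (A.image Prod.snd).filter (fun z => ¬ z ≤ y) := by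
      ext z
      rw [mem_rowsOf, Finset.mem_filter, mem_rowsOf]
      constructor
      · rintro ⟨x, hx⟩
        rw [hC, Finset.mem_filter] at hx
        exact ⟨⟨x, hx.1⟩, hx.2⟩
      · rintro ⟨⟨x, hx⟩, hz⟩
        exact ⟨x, Finset.mem_filter.mpr ⟨hx, hz⟩⟩
    have hrowsum : (B.image Prod.snd).card + (C.image Prod.snd).card = r := by
      rw [hrowsB, hrowsC, hr, Finset.card_filter_add_card_filter_not]
    have hcolsU : A.image Prod.fst = B.image Prod.fst ∪ C.image Prod.fst := by
      ext x
      rw [Finset.mem_union, mem_colsOf, mem_colsOf, mem_colsOf]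
      constructor
      · rintro ⟨z, hz⟩
        by_cases hzy : z ≤ y
        · exact Or.inl ⟨z, Finset.mem_filter.mpr ⟨hz, hzy⟩⟩
        · exact Or.inr ⟨z, Finset.mem_filter.mpr ⟨hz, hzy⟩⟩
      · rintro (⟨z, hz⟩ | ⟨z, hz⟩) <;>
          exact ⟨z, (Finset.mem_filter.mp hz).1⟩
    have hcolsdisj : Disjoint (B.image Prod.fst) (C.image Prod.fst) := by
      rw [Finset.disjoint_left]
      intro x hxB hxC
      obtain ⟨zb, hzb⟩ := mem_colsOf.mp hxB
      obtain ⟨zc, hzc⟩ := mem_colsOf.mp hxC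
      rw [Finset.mem_filter] at hzb hzc
      simp only at hzb hzc
      have h1 : (x, y) ∈ A := hcol x zb y zc hzb.1 hzc.1 hzb.2 (by omega)
      have h2 : (x, y + 1) ∈ A := hcol x zb (y + 1) zc hzb.1 hzc.1 (by omega) (by omega)
      exact hno x h1 h2
    have hcolsum : (B.image Prod.fst).card + (C.image Prod.fst).card = s := by
      rw [hs, hcolsU, Finset.card_union_of_disjoint hcolsdisj]
    have hBne : B.Nonempty := by
      obtain ⟨x, hx⟩ := mem_rowsOf.mp hy
      exact ⟨(x, y), Finset.mem_filter.mpr ⟨hx, le_refl y⟩⟩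
    have hCne : C.Nonempty := by
      obtain ⟨x, hx⟩ := mem_rowsOf.mp hy1
      exact ⟨(x, y + 1), Finset.mem_filter.mpr ⟨hx, by omega⟩⟩
    -- arithmetic contradiction
    have hBa : 2 ≤ ((B.image Prod.fst).card : ℤ) + (B.image Prod.snd).card := by
      have h1 := Finset.card_pos.mpr (hBne.image (Prod.fst))
      have h2 := Finset.card_pos.mpr (hBne.image (Prod.snd))
      omega
    have hCa : 2 ≤ ((C.image Prod.fst).card : ℤ) + (C.image Prod.snd).card := by
      have h1 := Finset.card_pos.mpr (hCne.image (Prod.fst))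
      have h2 := Finset.card_pos.mpr (hCne.image (Prod.snd))
      omega
    have hBb : 4 * (B.card : ℤ)
        ≤ (((B.image Prod.fst).card : ℤ) + (B.image Prod.snd).card) ^ 2 := by
      have h1 : (B.card : ℤ) ≤ ((B.image Prod.fst).card : ℤ) * (B.image Prod.snd).card := by
        exact_mod_cast card_le_mul B
      nlinarith [amgm ((B.image Prod.fst).card : ℤ) ((B.image Prod.snd).card : ℤ)]
    have hCb : 4 * (C.card : ℤ)
        ≤ (((C.image Prod.fst).card : ℤ) + (C.image Prod.snd).card) ^ 2 := by
      have h1 : (C.card : ℤ) ≤ ((C.image Prod.fst).card : ℤ) * (C.image Prod.snd).card := by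
        exact_mod_cast card_le_mul C
      nlinarith [amgm ((C.image Prod.fst).card : ℤ) ((C.image Prod.snd).card : ℤ)]
    have hsplit := arith_split hBa hCa hBb hCb
    have hKval : ((B.image Prod.fst).card : ℤ) + (B.image Prod.snd).card
        + (((C.image Prod.fst).card : ℤ) + (C.image Prod.snd).card) = K := by
      have := hTA_eq.2
      push_cast
      omega
    rw [show (((B.image Prod.fst).card : ℤ) + (B.image Prod.snd).card)
        + (((C.image Prod.fst).card : ℤ) + (C.image Prod.snd).card) - 1 = K - 1 by omega]
      at hsplit
    have hncast : ((B.card : ℤ)) + C.card = n := by exact_mod_cast hcards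
    nlinarith
  have hconn := conn_of A hrow hIcc hoverlap
  -- dimensions
  have hcolsne : (A.image Prod.fst).Nonempty := hAne.image _
  set xmin := (A.image Prod.fst).min' hcolsne with hxmin
  set xmax := (A.image Prod.fst).max' hcolsne with hxmax
  obtain ⟨ymin', hpmin⟩ := mem_colsOf.mp ((A.image Prod.fst).min'_mem hcolsne)
  obtain ⟨ymax', hpmax⟩ := mem_colsOf.mp ((A.image Prod.fst).max'_mem hcolsne)
  have hcolsIcc : A.image Prod.fst = Finset.Icc xmin xmax := by
    apply Finset.Subset.antisymm
    · intro x hx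
      exact Finset.mem_Icc.mpr ⟨(A.image Prod.fst).min'_le x hx, (A.image Prod.fst).le_max' x hx⟩
    · intro x hx
      rw [Finset.mem_Icc] at hx
      obtain ⟨y', hy'⟩ := path_cols (hconn (xmin, ymin') hpmin (xmax, ymax') hpmax) hpmin x
        hx.1 hx.2
      exact mem_colsOf.mpr ⟨y', hy'⟩
  have hminmax : xmin ≤ xmax := Finset.min'_le _ _ ((A.image Prod.fst).max'_mem hcolsne)
  have hscard : (s : ℤ) = xmax - xmin + 1 := by
    rw [hs, hcolsIcc, Int.card_Icc]
    omega
  have hrowsne2 := hrowsne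
  set ymin := (A.image Prod.snd).min' hrowsne with hymin
  set ymax := (A.image Prod.snd).max' hrowsne with hymax
  have hyminmax : ymin ≤ ymax := Finset.min'_le _ _ ((A.image Prod.snd).max'_mem hrowsne)
  have hrcard : (r : ℤ) = ymax - ymin + 1 := by
    rw [hr, hrowsIcc, Int.card_Icc]
    omega
  have hperimA : perim A = 2 * (r + s) := perim_eq_of_convex A hrow hcol
  have hW : polyWidth A = (s : ℤ) := by
    rw [polyWidth, max_unbot' hcolsne, min_untop' hcolsne, hscard]
  have hH : polyHeight A = (r : ℤ) := by
    rw [polyHeight, max_unbot' hrowsne, min_untop' hrowsne, hrcard]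
  refine ⟨⟨hAne, hconn⟩, ?_, ?_⟩
  · rw [MonotonePoly, hW, hH, hperimA]
    push_cast
    ring
  · intro B hBcard
    have hBne : B.Nonempty := Finset.card_pos.mp (by omega)
    have hKB : K ≤ ((B.image Prod.fst).card : ℤ) + (B.image Prod.snd).card := by
      refine sum_ge_K hlow ?_
      rw [← hBcard]
      exact card_le_mul B
    have hpB := perim_ge B
    have := hTA_eq.2
    omega

end PolyProof

/-- every minimizer of T among polyominoes with n unit squares is a
connected monotone polyomino of minimal perimeter; and the standard polyominoes with n
unit squares are among the minimizers of T. -/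
theorem T_minimizers_are_monotone_min_perimeter (n : ℕ) (hn : 0 < n) :
    (∀ A : Finset Cell, A.card = n →
        (∀ B : Finset Cell, B.card = n → Tpoly A ≤ Tpoly B) →
        PolyConnected A ∧ MonotonePoly A ∧
          ∀ B : Finset Cell, B.card = n → perim A ≤ perim B) ∧
    (∀ A : Finset Cell, A.card = n → IsStandardPoly A →
        ∀ B : Finset Cell, B.card = n → Tpoly A ≤ Tpoly B) := by
  constructor
  · intro A hA hmin
    exact PolyProof.minimizer_props n hn A hA hmin
  · intro A hA hstd B hB
    exact PolyProof.std_minimizer hstd B (by rw [hB, hA])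
end

section
/- For every connected polyomino c, the perimeter satisfies P(c) ≥ 2[ℓ1(c) + ℓ2(c)] + 4Q(c), where ℓ1(c) and ℓ2(c) are the numbers of columns and rows of the circumscribing rectangle of c and Q(c) is the number of holes of c. -/
namespace PerimBound
open Finset

/-- complement adjacency -/
def crel (A : Finset Cell) (u v : Cell) : Prop := adjacent u v ∧ u ∉ A ∧ v ∉ A

def holes (A : Finset Cell) : Set (Set Cell) :=
  {C : Set Cell | ∃ d : Cell, d ∉ A ∧
    C = {e : Cell | Relation.ReflTransGen (crel A) d e} ∧ C.Finite}

lemma numHoles_eq (A : Finset Cell) : numHoles A = (holes A).ncard := rfl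

lemma adj_symm {x y : Cell} (h : adjacent x y) : adjacent y x := by
  unfold adjacent at h ⊢
  rw [abs_sub_comm, abs_sub_comm y.2]
  exact h

lemma adj_bounds {x y : Cell} (h : adjacent x y) :
    x.1 - y.1 ≤ 1 ∧ y.1 - x.1 ≤ 1 ∧ x.2 - y.2 ≤ 1 ∧ y.2 - x.2 ≤ 1 := by
  unfold adjacent at h
  have a1 := le_abs_self (x.1 - y.1)
  have a2 := neg_abs_le (x.1 - y.1)
  have a3 := le_abs_self (x.2 - y.2)
  have a4 := neg_abs_le (x.2 - y.2)
  have a5 := abs_nonneg (x.1 - y.1)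
  have a6 := abs_nonneg (x.2 - y.2)
  refine ⟨by linarith, by linarith, by linarith, by linarith⟩

lemma adjR (a b : ℤ) : adjacent (a, b) (a + 1, b) := by simp [adjacent]
lemma adjL (a b : ℤ) : adjacent (a, b) (a - 1, b) := by simp [adjacent]
lemma adjU (a b : ℤ) : adjacent (a, b) (a, b + 1) := by simp [adjacent]
lemma adjD (a b : ℤ) : adjacent (a, b) (a, b - 1) := by simp [adjacent]

lemma mem_nbrs {c d : Cell} :
    d ∈ nbrs c ↔ d = (c.1 + 1, c.2) ∨ d = (c.1 - 1, c.2) ∨ d = (c.1, c.2 + 1) ∨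
      d = (c.1, c.2 - 1) := by
  simp [nbrs]

def edgeSet (A : Finset Cell) : Finset (Cell × Cell) :=
  A.biUnion (fun c => ((nbrs c).filter (fun d => d ∉ A)).image (fun d => (c, d)))

lemma mem_edgeSet {A : Finset Cell} {p : Cell × Cell} :
    p ∈ edgeSet A ↔ p.1 ∈ A ∧ p.2 ∈ nbrs p.1 ∧ p.2 ∉ A := by
  constructor
  · intro hp
    simp only [edgeSet, mem_biUnion, mem_image, mem_filter] at hp
    obtain ⟨c, hc, d, ⟨hd1, hd2⟩, rfl⟩ := hp
    exact ⟨hc, hd1, hd2⟩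
  · rintro ⟨h1, h2, h3⟩
    simp only [edgeSet, mem_biUnion, mem_image, mem_filter]
    exact ⟨p.1, h1, p.2, ⟨h2, h3⟩, rfl⟩

lemma perim_eq_card (A : Finset Cell) : perim A = (edgeSet A).card := by
  rw [edgeSet, card_biUnion]
  · refine Finset.sum_congr rfl (fun c _ => ?_)
    rw [card_image_of_injective]
    intro a b h
    simpa [Prod.ext_iff] using h
  · intro x _ y _ hxy
    rw [Function.onFun, Finset.disjoint_left]
    rintro p hp hq
    simp only [mem_image, mem_filter] at hp hq
    obtain ⟨d, _, rfl⟩ := hp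
    obtain ⟨d', _, h⟩ := hq
    exact hxy (congrArg Prod.fst h).symm

lemma exists_on_line (A : Finset Cell) (f : Cell → ℤ)
    (hf : ∀ x y : Cell, adjacent x y → f x - f y ≤ 1 ∧ f y - f x ≤ 1)
    {a b : Cell} (hab : Relation.ReflTransGen (adjIn A) a b) (ha : a ∈ A) :
    ∀ y : ℤ, (f a ≤ y ∧ y ≤ f b) ∨ (f b ≤ y ∧ y ≤ f a) → ∃ c ∈ A, f c = y := by
  induction hab with
  | refl => intro y hy; exact ⟨a, ha, by omega⟩
  | @tail w v h1 h2 ih =>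
    obtain ⟨hwA, hvA, hadj⟩ := h2
    intro y hy
    by_cases hc : (f a ≤ y ∧ y ≤ f w) ∨ (f w ≤ y ∧ y ≤ f a)
    · exact ih y hc
    · obtain ⟨l1, l2⟩ := hf w v hadj
      exact ⟨v, hvA, by omega⟩

lemma untop'_min {s : Finset ℤ} (hs : s.Nonempty) : WithTop.untopD 0 s.min = s.min' hs := by
  rw [← Finset.coe_min' hs]; rfl

lemma unbot'_max {s : Finset ℤ} (hs : s.Nonempty) : WithBot.unbotD 0 s.max = s.max' hs := by
  rw [← Finset.coe_max' hs]; rfl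

lemma holes_compl {A : Finset Cell} {K : Set Cell} (hK : K ∈ holes A) :
    ∀ e ∈ K, e ∉ A := by
  obtain ⟨d0, hd0, rfl, -⟩ := hK
  intro e he
  induction he with
  | refl => exact hd0
  | tail _ h ih => exact h.2.2

lemma holes_closed {A : Finset Cell} {K : Set Cell} (hK : K ∈ holes A)
    {e f : Cell} (he : e ∈ K) (hef : crel A e f) : f ∈ K := by
  obtain ⟨d0, hd0, rfl, -⟩ := hK
  exact Relation.ReflTransGen.tail he hef

lemma crel_symm (A : Finset Cell) : Symmetric (crel A) := by
  rintro u v ⟨h1, h2, h3⟩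
  exact ⟨adj_symm h1, h3, h2⟩

lemma holes_eq_of_mem {A : Finset Cell} {K1 K2 : Set Cell} (h1 : K1 ∈ holes A)
    (h2 : K2 ∈ holes A) {d : Cell} (hd1 : d ∈ K1) (hd2 : d ∈ K2) : K1 = K2 := by
  haveI : Std.Symm (crel A) := ⟨fun a b h => crel_symm A h⟩
  have hsymm : Symmetric (Relation.ReflTransGen (crel A)) := fun x y h => Std.Symm.symm x y h
  obtain ⟨a, ha, rfl, -⟩ := h1
  obtain ⟨b, hb, rfl, -⟩ := h2
  ext e
  constructor
  · intro he
    exact (hd2.trans (hsymm hd1)).trans he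
  · intro he
    exact (hd1.trans (hsymm hd2)).trans he

lemma holes_finite {A : Finset Cell} {K : Set Cell} (hK : K ∈ holes A) : K.Finite := by
  obtain ⟨d0, hd0, rfl, hf⟩ := hK; exact hf

lemma holes_ne {A : Finset Cell} {K : Set Cell} (hK : K ∈ holes A) : K.Nonempty := by
  obtain ⟨d0, hd0, rfl, -⟩ := hK; exact ⟨d0, Relation.ReflTransGen.refl⟩

/-- a cell from which an infinite complement ray emanates is in no hole. -/
lemma ray_not_in_hole {A : Finset Cell} {d : Cell} (f : ℕ → Cell) (hf0 : f 0 = d)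
    (hadj : ∀ k, adjacent (f k) (f (k + 1))) (hinj : Function.Injective f)
    (hray : ∀ k, f k ∉ A) {K : Set Cell} (hK : K ∈ holes A) : d ∉ K := by
  intro hdK
  have hmem : ∀ k, f k ∈ K := by
    intro k
    induction k with
    | zero => rw [hf0]; exact hdK
    | succ n ih => exact holes_closed hK ih ⟨hadj n, hray n, hray (n + 1)⟩
  exact (Set.infinite_of_injective_forall_mem hinj hmem) (holes_finite hK)

/- extremal cells of a finite set -/
open scoped Classical in
noncomputable def topCell (K : Set Cell) : Cell :=
  if h : K.Finite then
    (WithBot.unbotD 0 ((h.toFinset.filter (fun c => c.2 = WithBot.unbotD 0 (h.toFinset.image Prod.snd).max)).image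
        Prod.fst).max,
      WithBot.unbotD 0 (h.toFinset.image Prod.snd).max)
  else (0, 0)

open scoped Classical in
noncomputable def botCell (K : Set Cell) : Cell :=
  if h : K.Finite then
    (WithBot.unbotD 0 ((h.toFinset.filter (fun c => c.2 = WithTop.untopD 0 (h.toFinset.image Prod.snd).min)).image
        Prod.fst).max,
      WithTop.untopD 0 (h.toFinset.image Prod.snd).min)
  else (0, 0)

open scoped Classical in
noncomputable def leftCell (K : Set Cell) : Cell :=
  if h : K.Finite then
    (WithTop.untopD 0 (h.toFinset.image Prod.fst).min,
      WithBot.unbotD 0 ((h.toFinset.filter (fun c => c.1 = WithTop.untopD 0 (h.toFinset.image Prod.fst).min)).image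
        Prod.snd).max)
  else (0, 0)

open scoped Classical in
noncomputable def rightCell (K : Set Cell) : Cell :=
  if h : K.Finite then
    (WithBot.unbotD 0 (h.toFinset.image Prod.fst).max,
      WithBot.unbotD 0 ((h.toFinset.filter (fun c => c.1 = WithBot.unbotD 0 (h.toFinset.image Prod.fst).max)).image
        Prod.snd).max)
  else (0, 0)

lemma topCell_spec {K : Set Cell} (h : K.Finite) (hne : K.Nonempty) :
    topCell K ∈ K ∧ ∀ e ∈ K, e.2 ≤ (topCell K).2 := by
  rw [topCell, dif_pos h]
  have hF : h.toFinset.Nonempty := by simpa using hne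
  have h1 : (h.toFinset.image Prod.snd).Nonempty := hF.image _
  rw [unbot'_max h1]
  set yT := (h.toFinset.image Prod.snd).max' h1 with hyT
  have hy : yT ∈ h.toFinset.image Prod.snd := Finset.max'_mem _ _
  obtain ⟨c, hc, hcy⟩ := Finset.mem_image.mp hy
  have h2 : ((h.toFinset.filter (fun c => c.2 = yT)).image Prod.fst).Nonempty :=
    ⟨c.1, Finset.mem_image.mpr ⟨c, Finset.mem_filter.mpr ⟨hc, hcy⟩, rfl⟩⟩
  rw [unbot'_max h2]
  have hx := Finset.max'_mem _ h2
  obtain ⟨c', hc', hcx⟩ := Finset.mem_image.mp hx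
  obtain ⟨hc'K, hc'y⟩ := Finset.mem_filter.mp hc'
  constructor
  · have : c' = (((h.toFinset.filter (fun c => c.2 = yT)).image Prod.fst).max' h2, yT) := by
      rw [← hcx, ← hc'y]
    rw [← this]
    simpa using hc'K
  · intro e he
    exact Finset.le_max' _ _ (Finset.mem_image.mpr ⟨e, by simpa using he, rfl⟩)

lemma botCell_spec {K : Set Cell} (h : K.Finite) (hne : K.Nonempty) :
    botCell K ∈ K ∧ ∀ e ∈ K, (botCell K).2 ≤ e.2 := by
  rw [botCell, dif_pos h]
  have hF : h.toFinset.Nonempty := by simpa using hne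
  have h1 : (h.toFinset.image Prod.snd).Nonempty := hF.image _
  rw [untop'_min h1]
  set yT := (h.toFinset.image Prod.snd).min' h1 with hyT
  have hy : yT ∈ h.toFinset.image Prod.snd := Finset.min'_mem _ _
  obtain ⟨c, hc, hcy⟩ := Finset.mem_image.mp hy
  have h2 : ((h.toFinset.filter (fun c => c.2 = yT)).image Prod.fst).Nonempty :=
    ⟨c.1, Finset.mem_image.mpr ⟨c, Finset.mem_filter.mpr ⟨hc, hcy⟩, rfl⟩⟩
  rw [unbot'_max h2]
  have hx := Finset.max'_mem _ h2
  obtain ⟨c', hc', hcx⟩ := Finset.mem_image.mp hx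
  obtain ⟨hc'K, hc'y⟩ := Finset.mem_filter.mp hc'
  constructor
  · have : c' = (((h.toFinset.filter (fun c => c.2 = yT)).image Prod.fst).max' h2, yT) := by
      rw [← hcx, ← hc'y]
    rw [← this]
    simpa using hc'K
  · intro e he
    exact Finset.min'_le _ _ (Finset.mem_image.mpr ⟨e, by simpa using he, rfl⟩)

lemma leftCell_spec {K : Set Cell} (h : K.Finite) (hne : K.Nonempty) :
    leftCell K ∈ K ∧ ∀ e ∈ K, (leftCell K).1 ≤ e.1 := by
  rw [leftCell, dif_pos h]
  have hF : h.toFinset.Nonempty := by simpa using hne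
  have h1 : (h.toFinset.image Prod.fst).Nonempty := hF.image _
  rw [untop'_min h1]
  set xT := (h.toFinset.image Prod.fst).min' h1 with hxT
  have hy : xT ∈ h.toFinset.image Prod.fst := Finset.min'_mem _ _
  obtain ⟨c, hc, hcy⟩ := Finset.mem_image.mp hy
  have h2 : ((h.toFinset.filter (fun c => c.1 = xT)).image Prod.snd).Nonempty :=
    ⟨c.2, Finset.mem_image.mpr ⟨c, Finset.mem_filter.mpr ⟨hc, hcy⟩, rfl⟩⟩
  rw [unbot'_max h2]
  have hx := Finset.max'_mem _ h2
  obtain ⟨c', hc', hcx⟩ := Finset.mem_image.mp hx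
  obtain ⟨hc'K, hc'y⟩ := Finset.mem_filter.mp hc'
  constructor
  · have : c' = (xT, ((h.toFinset.filter (fun c => c.1 = xT)).image Prod.snd).max' h2) := by
      rw [← hcx, ← hc'y]
    rw [← this]
    simpa using hc'K
  · intro e he
    exact Finset.min'_le _ _ (Finset.mem_image.mpr ⟨e, by simpa using he, rfl⟩)

lemma rightCell_spec {K : Set Cell} (h : K.Finite) (hne : K.Nonempty) :
    rightCell K ∈ K ∧ ∀ e ∈ K, e.1 ≤ (rightCell K).1 := by
  rw [rightCell, dif_pos h]
  have hF : h.toFinset.Nonempty := by simpa using hne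
  have h1 : (h.toFinset.image Prod.fst).Nonempty := hF.image _
  rw [unbot'_max h1]
  set xT := (h.toFinset.image Prod.fst).max' h1 with hxT
  have hy : xT ∈ h.toFinset.image Prod.fst := Finset.max'_mem _ _
  obtain ⟨c, hc, hcy⟩ := Finset.mem_image.mp hy
  have h2 : ((h.toFinset.filter (fun c => c.1 = xT)).image Prod.snd).Nonempty :=
    ⟨c.2, Finset.mem_image.mpr ⟨c, Finset.mem_filter.mpr ⟨hc, hcy⟩, rfl⟩⟩
  rw [unbot'_max h2]
  have hx := Finset.max'_mem _ h2
  obtain ⟨c', hc', hcx⟩ := Finset.mem_image.mp hx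
  obtain ⟨hc'K, hc'y⟩ := Finset.mem_filter.mp hc'
  constructor
  · have : c' = (xT, ((h.toFinset.filter (fun c => c.1 = xT)).image Prod.snd).max' h2) := by
      rw [← hcx, ← hc'y]
    rw [← this]
    simpa using hc'K
  · intro e he
    exact Finset.le_max' _ _ (Finset.mem_image.mpr ⟨e, by simpa using he, rfl⟩)

noncomputable def holePairs (K : Set Cell) : Finset (Cell × Cell) :=
  {(((topCell K).1, (topCell K).2 + 1), topCell K),
   (((botCell K).1, (botCell K).2 - 1), botCell K),
   (((leftCell K).1 - 1, (leftCell K).2), leftCell K),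
   (((rightCell K).1 + 1, (rightCell K).2), rightCell K)}

lemma holePairs_snd {A : Finset Cell} {K : Set Cell} (hK : K ∈ holes A)
    {p : Cell × Cell} (hp : p ∈ holePairs K) : p.2 ∈ K := by
  have h := holes_finite hK
  have hne := holes_ne hK
  simp only [holePairs, mem_insert, mem_singleton] at hp
  rcases hp with rfl | rfl | rfl | rfl
  · exact (topCell_spec h hne).1
  · exact (botCell_spec h hne).1
  · exact (leftCell_spec h hne).1
  · exact (rightCell_spec h hne).1

lemma holePairs_mem_edgeSet {A : Finset Cell} {K : Set Cell} (hK : K ∈ holes A)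
    {p : Cell × Cell} (hp : p ∈ holePairs K) : p ∈ edgeSet A := by
  have h := holes_finite hK
  have hne := holes_ne hK
  have hcompl := holes_compl hK
  rw [mem_edgeSet]
  simp only [holePairs, mem_insert, mem_singleton] at hp
  rcases hp with rfl | rfl | rfl | rfl
  · obtain ⟨hmem, hbd⟩ := topCell_spec h hne
    refine ⟨?_, by simp [mem_nbrs, Prod.ext_iff], hcompl _ hmem⟩
    by_contra hA
    have h2 : ((topCell K).1, (topCell K).2 + 1) ∈ K :=
      holes_closed hK hmem ⟨adjU _ _, hcompl _ hmem, hA⟩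
    have h3 : (topCell K).2 + 1 ≤ (topCell K).2 := hbd _ h2
    omega
  · obtain ⟨hmem, hbd⟩ := botCell_spec h hne
    refine ⟨?_, by simp [mem_nbrs, Prod.ext_iff], hcompl _ hmem⟩
    by_contra hA
    have h2 : ((botCell K).1, (botCell K).2 - 1) ∈ K :=
      holes_closed hK hmem ⟨adjD _ _, hcompl _ hmem, hA⟩
    have h3 : (botCell K).2 ≤ (botCell K).2 - 1 := hbd _ h2
    omega
  · obtain ⟨hmem, hbd⟩ := leftCell_spec h hne
    refine ⟨?_, by simp [mem_nbrs, Prod.ext_iff], hcompl _ hmem⟩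
    by_contra hA
    have h2 : ((leftCell K).1 - 1, (leftCell K).2) ∈ K :=
      holes_closed hK hmem ⟨adjL _ _, hcompl _ hmem, hA⟩
    have h3 : (leftCell K).1 ≤ (leftCell K).1 - 1 := hbd _ h2
    omega
  · obtain ⟨hmem, hbd⟩ := rightCell_spec h hne
    refine ⟨?_, by simp [mem_nbrs, Prod.ext_iff], hcompl _ hmem⟩
    by_contra hA
    have h2 : ((rightCell K).1 + 1, (rightCell K).2) ∈ K :=
      holes_closed hK hmem ⟨adjR _ _, hcompl _ hmem, hA⟩
    have h3 : (rightCell K).1 + 1 ≤ (rightCell K).1 := hbd _ h2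
    omega

lemma holePairs_card (K : Set Cell) : (holePairs K).card = 4 := by
  rw [holePairs]
  rw [Finset.card_insert_of_notMem (by simp [Prod.ext_iff]; omega),
    Finset.card_insert_of_notMem (by simp [Prod.ext_iff]; omega),
    Finset.card_insert_of_notMem (by simp [Prod.ext_iff]; omega),
    Finset.card_singleton]

/- boundary pair extractors for rows and columns -/
def lp (A : Finset Cell) (y : ℤ) : Cell × Cell :=
  ((WithTop.untopD 0 ((A.filter (fun c => c.2 = y)).image Prod.fst).min, y),
   (WithTop.untopD 0 ((A.filter (fun c => c.2 = y)).image Prod.fst).min - 1, y))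

def rp (A : Finset Cell) (y : ℤ) : Cell × Cell :=
  ((WithBot.unbotD 0 ((A.filter (fun c => c.2 = y)).image Prod.fst).max, y),
   (WithBot.unbotD 0 ((A.filter (fun c => c.2 = y)).image Prod.fst).max + 1, y))

def bp (A : Finset Cell) (x : ℤ) : Cell × Cell :=
  ((x, WithTop.untopD 0 ((A.filter (fun c => c.1 = x)).image Prod.snd).min),
   (x, WithTop.untopD 0 ((A.filter (fun c => c.1 = x)).image Prod.snd).min - 1))

def tp (A : Finset Cell) (x : ℤ) : Cell × Cell :=
  ((x, WithBot.unbotD 0 ((A.filter (fun c => c.1 = x)).image Prod.snd).max),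
   (x, WithBot.unbotD 0 ((A.filter (fun c => c.1 = x)).image Prod.snd).max + 1))

lemma lp_spec {A : Finset Cell} {y : ℤ} (hy : y ∈ A.image Prod.snd) :
    lp A y ∈ edgeSet A ∧ ∀ K ∈ holes A, (lp A y).2 ∉ K := by
  obtain ⟨c0, hc0, hc0y⟩ := Finset.mem_image.mp hy
  have hs : ((A.filter (fun c => c.2 = y)).image Prod.fst).Nonempty :=
    ⟨c0.1, Finset.mem_image.mpr ⟨c0, Finset.mem_filter.mpr ⟨hc0, hc0y⟩, rfl⟩⟩
  have hmv : WithTop.untopD 0 ((A.filter (fun c => c.2 = y)).image Prod.fst).min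
      = ((A.filter (fun c => c.2 = y)).image Prod.fst).min' hs := untop'_min hs
  set m := WithTop.untopD 0 ((A.filter (fun c => c.2 = y)).image Prod.fst).min with hm
  have hle : ∀ c ∈ A, c.2 = y → m ≤ c.1 := by
    intro c hc hcy
    rw [hmv]
    exact Finset.min'_le _ _ (Finset.mem_image.mpr ⟨c, Finset.mem_filter.mpr ⟨hc, hcy⟩, rfl⟩)
  have hray : ∀ k : ℕ, ((m - 1 - k : ℤ), y) ∉ A := by
    intro k hmem
    have := hle _ hmem rfl
    simp at this
    omega
  have hmA : ((m, y) : Cell) ∈ A := by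
    have : m ∈ (A.filter (fun c => c.2 = y)).image Prod.fst := by
      rw [hmv]; exact Finset.min'_mem _ _
    obtain ⟨c, hc, hcm⟩ := Finset.mem_image.mp this
    obtain ⟨hcA, hcy⟩ := Finset.mem_filter.mp hc
    have : c = ((m, y) : Cell) := Prod.ext hcm hcy
    rwa [this] at hcA
  constructor
  · rw [mem_edgeSet]
    refine ⟨hmA, by simp [lp, mem_nbrs, Prod.ext_iff], ?_⟩
    have := hray 0
    simpa [lp] using this
  · intro K hK
    refine ray_not_in_hole (fun k => ((m - 1 - k : ℤ), y)) (by simp [lp, hm]) ?_ ?_ hray hK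
    · intro k
      show adjacent ((m - 1 - (k : ℕ) : ℤ), y) ((m - 1 - ((k : ℕ) + 1 : ℕ) : ℤ), y)
      have h9 : ((m - 1 - ((k : ℕ) + 1 : ℕ) : ℤ), y) = ((m - 1 - (k : ℕ) - 1 : ℤ), y) := by
        simp only [Prod.mk.injEq]; constructor
        · push_cast; ring
        · trivial
      rw [h9]
      exact adjL _ _
    · intro a b hab
      simp only [Prod.mk.injEq] at hab
      omega

lemma rp_spec {A : Finset Cell} {y : ℤ} (hy : y ∈ A.image Prod.snd) :
    rp A y ∈ edgeSet A ∧ ∀ K ∈ holes A, (rp A y).2 ∉ K := by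
  obtain ⟨c0, hc0, hc0y⟩ := Finset.mem_image.mp hy
  have hs : ((A.filter (fun c => c.2 = y)).image Prod.fst).Nonempty :=
    ⟨c0.1, Finset.mem_image.mpr ⟨c0, Finset.mem_filter.mpr ⟨hc0, hc0y⟩, rfl⟩⟩
  have hmv : WithBot.unbotD 0 ((A.filter (fun c => c.2 = y)).image Prod.fst).max
      = ((A.filter (fun c => c.2 = y)).image Prod.fst).max' hs := unbot'_max hs
  set m := WithBot.unbotD 0 ((A.filter (fun c => c.2 = y)).image Prod.fst).max with hm
  have hle : ∀ c ∈ A, c.2 = y → c.1 ≤ m := by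
    intro c hc hcy
    rw [hmv]
    exact Finset.le_max' _ _ (Finset.mem_image.mpr ⟨c, Finset.mem_filter.mpr ⟨hc, hcy⟩, rfl⟩)
  have hray : ∀ k : ℕ, ((m + 1 + k : ℤ), y) ∉ A := by
    intro k hmem
    have := hle _ hmem rfl
    simp at this
    omega
  have hmA : ((m, y) : Cell) ∈ A := by
    have : m ∈ (A.filter (fun c => c.2 = y)).image Prod.fst := by
      rw [hmv]; exact Finset.max'_mem _ _
    obtain ⟨c, hc, hcm⟩ := Finset.mem_image.mp this
    obtain ⟨hcA, hcy⟩ := Finset.mem_filter.mp hc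
    have : c = ((m, y) : Cell) := Prod.ext hcm hcy
    rwa [this] at hcA
  constructor
  · rw [mem_edgeSet]
    refine ⟨hmA, by simp [rp, mem_nbrs, Prod.ext_iff], ?_⟩
    have := hray 0
    simpa [rp] using this
  · intro K hK
    refine ray_not_in_hole (fun k => ((m + 1 + k : ℤ), y)) (by simp [rp, hm]) ?_ ?_ hray hK
    · intro k
      show adjacent ((m + 1 + (k : ℕ) : ℤ), y) ((m + 1 + ((k : ℕ) + 1 : ℕ) : ℤ), y)
      have h9 : ((m + 1 + ((k : ℕ) + 1 : ℕ) : ℤ), y) = ((m + 1 + (k : ℕ) + 1 : ℤ), y) := by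
        simp only [Prod.mk.injEq]; constructor
        · push_cast; ring
        · trivial
      rw [h9]
      exact adjR _ _
    · intro a b hab
      simp only [Prod.mk.injEq] at hab
      omega

lemma bp_spec {A : Finset Cell} {x : ℤ} (hx : x ∈ A.image Prod.fst) :
    bp A x ∈ edgeSet A ∧ ∀ K ∈ holes A, (bp A x).2 ∉ K := by
  obtain ⟨c0, hc0, hc0y⟩ := Finset.mem_image.mp hx
  have hs : ((A.filter (fun c => c.1 = x)).image Prod.snd).Nonempty :=
    ⟨c0.2, Finset.mem_image.mpr ⟨c0, Finset.mem_filter.mpr ⟨hc0, hc0y⟩, rfl⟩⟩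
  have hmv : WithTop.untopD 0 ((A.filter (fun c => c.1 = x)).image Prod.snd).min
      = ((A.filter (fun c => c.1 = x)).image Prod.snd).min' hs := untop'_min hs
  set m := WithTop.untopD 0 ((A.filter (fun c => c.1 = x)).image Prod.snd).min with hm
  have hle : ∀ c ∈ A, c.1 = x → m ≤ c.2 := by
    intro c hc hcy
    rw [hmv]
    exact Finset.min'_le _ _ (Finset.mem_image.mpr ⟨c, Finset.mem_filter.mpr ⟨hc, hcy⟩, rfl⟩)
  have hray : ∀ k : ℕ, ((x, (m - 1 - k : ℤ)) : Cell) ∉ A := by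
    intro k hmem
    have := hle _ hmem rfl
    simp at this
    omega
  have hmA : ((x, m) : Cell) ∈ A := by
    have : m ∈ (A.filter (fun c => c.1 = x)).image Prod.snd := by
      rw [hmv]; exact Finset.min'_mem _ _
    obtain ⟨c, hc, hcm⟩ := Finset.mem_image.mp this
    obtain ⟨hcA, hcy⟩ := Finset.mem_filter.mp hc
    have : c = ((x, m) : Cell) := Prod.ext hcy hcm
    rwa [this] at hcA
  constructor
  · rw [mem_edgeSet]
    refine ⟨hmA, by simp [bp, mem_nbrs, Prod.ext_iff], ?_⟩
    have := hray 0
    simpa [bp] using this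
  · intro K hK
    refine ray_not_in_hole (fun k => ((x, (m - 1 - k : ℤ)) : Cell)) (by simp [bp, hm]) ?_ ?_ hray hK
    · intro k
      show adjacent ((x, (m - 1 - (k : ℕ) : ℤ)) : Cell) ((x, (m - 1 - ((k : ℕ) + 1 : ℕ) : ℤ)) : Cell)
      have h9 : ((x, (m - 1 - ((k : ℕ) + 1 : ℕ) : ℤ)) : Cell) = ((x, (m - 1 - (k : ℕ) - 1 : ℤ)) : Cell) := by
        simp only [Prod.mk.injEq]; constructor
        · trivial
        · push_cast; ring
      rw [h9]
      exact adjD _ _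
    · intro a b hab
      simp only [Prod.mk.injEq] at hab
      omega

lemma tp_spec {A : Finset Cell} {x : ℤ} (hx : x ∈ A.image Prod.fst) :
    tp A x ∈ edgeSet A ∧ ∀ K ∈ holes A, (tp A x).2 ∉ K := by
  obtain ⟨c0, hc0, hc0y⟩ := Finset.mem_image.mp hx
  have hs : ((A.filter (fun c => c.1 = x)).image Prod.snd).Nonempty :=
    ⟨c0.2, Finset.mem_image.mpr ⟨c0, Finset.mem_filter.mpr ⟨hc0, hc0y⟩, rfl⟩⟩
  have hmv : WithBot.unbotD 0 ((A.filter (fun c => c.1 = x)).image Prod.snd).max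
      = ((A.filter (fun c => c.1 = x)).image Prod.snd).max' hs := unbot'_max hs
  set m := WithBot.unbotD 0 ((A.filter (fun c => c.1 = x)).image Prod.snd).max with hm
  have hle : ∀ c ∈ A, c.1 = x → c.2 ≤ m := by
    intro c hc hcy
    rw [hmv]
    exact Finset.le_max' _ _ (Finset.mem_image.mpr ⟨c, Finset.mem_filter.mpr ⟨hc, hcy⟩, rfl⟩)
  have hray : ∀ k : ℕ, ((x, (m + 1 + k : ℤ)) : Cell) ∉ A := by
    intro k hmem
    have := hle _ hmem rfl
    simp at this
    omega
  have hmA : ((x, m) : Cell) ∈ A := by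
    have : m ∈ (A.filter (fun c => c.1 = x)).image Prod.snd := by
      rw [hmv]; exact Finset.max'_mem _ _
    obtain ⟨c, hc, hcm⟩ := Finset.mem_image.mp this
    obtain ⟨hcA, hcy⟩ := Finset.mem_filter.mp hc
    have : c = ((x, m) : Cell) := Prod.ext hcy hcm
    rwa [this] at hcA
  constructor
  · rw [mem_edgeSet]
    refine ⟨hmA, by simp [tp, mem_nbrs, Prod.ext_iff], ?_⟩
    have := hray 0
    simpa [tp] using this
  · intro K hK
    refine ray_not_in_hole (fun k => ((x, (m + 1 + k : ℤ)) : Cell)) (by simp [tp, hm]) ?_ ?_ hray hK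
    · intro k
      show adjacent ((x, (m + 1 + (k : ℕ) : ℤ)) : Cell) ((x, (m + 1 + ((k : ℕ) + 1 : ℕ) : ℤ)) : Cell)
      have h9 : ((x, (m + 1 + ((k : ℕ) + 1 : ℕ) : ℤ)) : Cell) = ((x, (m + 1 + (k : ℕ) + 1 : ℤ)) : Cell) := by
        simp only [Prod.mk.injEq]; constructor
        · trivial
        · push_cast; ring
      rw [h9]
      exact adjU _ _
    · intro a b hab
      simp only [Prod.mk.injEq] at hab
      omega

end PerimBound

/-- for every connected polyomino, P(c) ≥ 2[ℓ1(c)+ℓ2(c)] + 4Q(c). -/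
theorem perimeter_lower_bound (A : Finset Cell) (hconn : PolyConnected A) :
    2 * (polyWidth A + polyHeight A) + 4 * (numHoles A : ℤ) ≤ (perim A : ℤ) := by
  classical
  obtain ⟨hne, hpath⟩ := hconn
  -- rows and columns
  set R := A.image Prod.snd with hR
  set C := A.image Prod.fst with hC
  have hRne : R.Nonempty := hne.image _
  have hCne : C.Nonempty := hne.image _
  -- rows form an interval
  have hrowI : R = Finset.Icc (R.min' hRne) (R.max' hRne) := by
    apply Finset.Subset.antisymm
    · intro y hy
      exact Finset.mem_Icc.mpr ⟨Finset.min'_le _ _ hy, Finset.le_max' _ _ hy⟩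
    · intro y hy
      rw [Finset.mem_Icc] at hy
      obtain ⟨a, ha, hay⟩ := Finset.mem_image.mp (Finset.min'_mem R hRne)
      obtain ⟨b, hb, hby⟩ := Finset.mem_image.mp (Finset.max'_mem R hRne)
      obtain ⟨c, hcA, hcy⟩ := PerimBound.exists_on_line A Prod.snd
        (fun u v h => ⟨(PerimBound.adj_bounds h).2.2.1, (PerimBound.adj_bounds h).2.2.2⟩)
        (hpath a ha b hb) ha y (Or.inl ⟨by omega, by omega⟩)
      exact Finset.mem_image.mpr ⟨c, hcA, hcy⟩
  have hcolI : C = Finset.Icc (C.min' hCne) (C.max' hCne) := by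
    apply Finset.Subset.antisymm
    · intro y hy
      exact Finset.mem_Icc.mpr ⟨Finset.min'_le _ _ hy, Finset.le_max' _ _ hy⟩
    · intro y hy
      rw [Finset.mem_Icc] at hy
      obtain ⟨a, ha, hay⟩ := Finset.mem_image.mp (Finset.min'_mem C hCne)
      obtain ⟨b, hb, hby⟩ := Finset.mem_image.mp (Finset.max'_mem C hCne)
      obtain ⟨c, hcA, hcy⟩ := PerimBound.exists_on_line A Prod.fst
        (fun u v h => ⟨(PerimBound.adj_bounds h).1, (PerimBound.adj_bounds h).2.1⟩)
        (hpath a ha b hb) ha y (Or.inl ⟨by omega, by omega⟩)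
      exact Finset.mem_image.mpr ⟨c, hcA, hcy⟩
  have hRcard : (R.card : ℤ) = polyHeight A := by
    have h1 : R.min' hRne ≤ R.max' hRne := Finset.min'_le _ _ (Finset.max'_mem _ _)
    rw [polyHeight, ← hR, PerimBound.unbot'_max hRne, PerimBound.untop'_min hRne]
    nth_rewrite 1 [hrowI]
    rw [Int.card_Icc]
    omega
  have hCcard : (C.card : ℤ) = polyWidth A := by
    have h1 : C.min' hCne ≤ C.max' hCne := Finset.min'_le _ _ (Finset.max'_mem _ _)
    rw [polyWidth, ← hC, PerimBound.unbot'_max hCne, PerimBound.untop'_min hCne]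
    nth_rewrite 1 [hcolI]
    rw [Int.card_Icc]
    omega
  -- reduce to a finite family of holes
  suffices key : ∀ HF : Finset (Set Cell), (∀ K ∈ HF, K ∈ PerimBound.holes A) →
      2 * (polyWidth A + polyHeight A) + 4 * (HF.card : ℤ) ≤ (perim A : ℤ) by
    by_cases hfin : (PerimBound.holes A).Finite
    · have hkey := key hfin.toFinset (fun K hK => hfin.mem_toFinset.mp hK)
      have hQ : numHoles A = hfin.toFinset.card := by
        rw [PerimBound.numHoles_eq, Set.ncard_eq_toFinset_card _ hfin]
      rw [hQ]
      exact hkey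
    · rw [PerimBound.numHoles_eq, Set.Infinite.ncard hfin]
      simpa using key ∅ (by simp)
  intro HF hHF
  set S1 := R.image (PerimBound.lp A) with hS1
  set S2 := R.image (PerimBound.rp A) with hS2
  set S3 := C.image (PerimBound.bp A) with hS3
  set S4 := C.image (PerimBound.tp A) with hS4
  set S5 := HF.biUnion PerimBound.holePairs with hS5
  -- membership characterizations
  have m1 : ∀ p ∈ S1, ∃ y ∈ R, p = PerimBound.lp A y := by
    intro p hp; obtain ⟨y, hy, h⟩ := Finset.mem_image.mp hp; exact ⟨y, hy, h.symm⟩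
  have m2 : ∀ p ∈ S2, ∃ y ∈ R, p = PerimBound.rp A y := by
    intro p hp; obtain ⟨y, hy, h⟩ := Finset.mem_image.mp hp; exact ⟨y, hy, h.symm⟩
  have m3 : ∀ p ∈ S3, ∃ x ∈ C, p = PerimBound.bp A x := by
    intro p hp; obtain ⟨y, hy, h⟩ := Finset.mem_image.mp hp; exact ⟨y, hy, h.symm⟩
  have m4 : ∀ p ∈ S4, ∃ x ∈ C, p = PerimBound.tp A x := by
    intro p hp; obtain ⟨y, hy, h⟩ := Finset.mem_image.mp hp; exact ⟨y, hy, h.symm⟩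
  -- offsets
  have off1 : ∀ p ∈ S1, p.2.1 = p.1.1 - 1 ∧ p.2.2 = p.1.2 := by
    intro p hp; obtain ⟨y, _, rfl⟩ := m1 p hp; exact ⟨rfl, rfl⟩
  have off2 : ∀ p ∈ S2, p.2.1 = p.1.1 + 1 ∧ p.2.2 = p.1.2 := by
    intro p hp; obtain ⟨y, _, rfl⟩ := m2 p hp; exact ⟨rfl, rfl⟩
  have off3 : ∀ p ∈ S3, p.2.1 = p.1.1 ∧ p.2.2 = p.1.2 - 1 := by
    intro p hp; obtain ⟨y, _, rfl⟩ := m3 p hp; exact ⟨rfl, rfl⟩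
  have off4 : ∀ p ∈ S4, p.2.1 = p.1.1 ∧ p.2.2 = p.1.2 + 1 := by
    intro p hp; obtain ⟨y, _, rfl⟩ := m4 p hp; exact ⟨rfl, rfl⟩
  have nohole : ∀ p, ((∃ y ∈ R, p = PerimBound.lp A y) ∨ (∃ y ∈ R, p = PerimBound.rp A y)
      ∨ (∃ x ∈ C, p = PerimBound.bp A x) ∨ (∃ x ∈ C, p = PerimBound.tp A x)) →
      p ∉ S5 := by
    rintro p hp hp5
    obtain ⟨K, hKF, hpK⟩ := Finset.mem_biUnion.mp hp5
    have hK := hHF K hKF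
    have hsnd := PerimBound.holePairs_snd hK hpK
    rcases hp with ⟨y, hy, rfl⟩ | ⟨y, hy, rfl⟩ | ⟨x, hx, rfl⟩ | ⟨x, hx, rfl⟩
    · exact (PerimBound.lp_spec hy).2 K hK hsnd
    · exact (PerimBound.rp_spec hy).2 K hK hsnd
    · exact (PerimBound.bp_spec hx).2 K hK hsnd
    · exact (PerimBound.tp_spec hx).2 K hK hsnd
  -- all inside edgeSet
  have hsub : S1 ∪ S2 ∪ S3 ∪ S4 ∪ S5 ⊆ PerimBound.edgeSet A := by
    intro p hp
    simp only [Finset.mem_union] at hp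
    rcases hp with ((((hp | hp) | hp) | hp) | hp)
    · obtain ⟨y, hy, rfl⟩ := m1 p hp; exact (PerimBound.lp_spec hy).1
    · obtain ⟨y, hy, rfl⟩ := m2 p hp; exact (PerimBound.rp_spec hy).1
    · obtain ⟨x, hx, rfl⟩ := m3 p hp; exact (PerimBound.bp_spec hx).1
    · obtain ⟨x, hx, rfl⟩ := m4 p hp; exact (PerimBound.tp_spec hx).1
    · obtain ⟨K, hKF, hpK⟩ := Finset.mem_biUnion.mp hp
      exact PerimBound.holePairs_mem_edgeSet (hHF K hKF) hpK
  -- cardinalities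
  have c1 : S1.card = R.card := Finset.card_image_of_injOn (by
    intro y _ y' _ h
    have := congrArg (fun q => q.1.2) h
    simpa [PerimBound.lp] using this)
  have c2 : S2.card = R.card := Finset.card_image_of_injOn (by
    intro y _ y' _ h
    have := congrArg (fun q => q.1.2) h
    simpa [PerimBound.rp] using this)
  have c3 : S3.card = C.card := Finset.card_image_of_injOn (by
    intro y _ y' _ h
    have := congrArg (fun q => q.1.1) h
    simpa [PerimBound.bp] using this)
  have c4 : S4.card = C.card := Finset.card_image_of_injOn (by
    intro y _ y' _ h
    have := congrArg (fun q => q.1.1) h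
    simpa [PerimBound.tp] using this)
  have c5 : S5.card = 4 * HF.card := by
    rw [hS5, Finset.card_biUnion]
    · rw [Finset.sum_congr rfl (fun K _ => PerimBound.holePairs_card K)]
      rw [Finset.sum_const, smul_eq_mul, mul_comm]
    · intro K1 h1 K2 h2 hne12
      rw [Function.onFun, Finset.disjoint_left]
      intro p hp1 hp2
      exact hne12 (PerimBound.holes_eq_of_mem (hHF K1 h1) (hHF K2 h2)
        (PerimBound.holePairs_snd (hHF K1 h1) hp1)
        (PerimBound.holePairs_snd (hHF K2 h2) hp2))
  -- disjointness
  have d12 : Disjoint S1 S2 := Finset.disjoint_left.mpr (by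
    intro p h1 h2; have := off1 p h1; have := off2 p h2; omega)
  have d13 : Disjoint S1 S3 := Finset.disjoint_left.mpr (by
    intro p h1 h2; have := off1 p h1; have := off3 p h2; omega)
  have d14 : Disjoint S1 S4 := Finset.disjoint_left.mpr (by
    intro p h1 h2; have := off1 p h1; have := off4 p h2; omega)
  have d23 : Disjoint S2 S3 := Finset.disjoint_left.mpr (by
    intro p h1 h2; have := off2 p h1; have := off3 p h2; omega)
  have d24 : Disjoint S2 S4 := Finset.disjoint_left.mpr (by
    intro p h1 h2; have := off2 p h1; have := off4 p h2; omega)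
  have d34 : Disjoint S3 S4 := Finset.disjoint_left.mpr (by
    intro p h1 h2; have := off3 p h1; have := off4 p h2; omega)
  have d15 : Disjoint S1 S5 := Finset.disjoint_left.mpr (by
    intro p h1 h5; exact nohole p (Or.inl (m1 p h1)) h5)
  have d25 : Disjoint S2 S5 := Finset.disjoint_left.mpr (by
    intro p h1 h5; exact nohole p (Or.inr (Or.inl (m2 p h1))) h5)
  have d35 : Disjoint S3 S5 := Finset.disjoint_left.mpr (by
    intro p h1 h5; exact nohole p (Or.inr (Or.inr (Or.inl (m3 p h1)))) h5)
  have d45 : Disjoint S4 S5 := Finset.disjoint_left.mpr (by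
    intro p h1 h5; exact nohole p (Or.inr (Or.inr (Or.inr (m4 p h1)))) h5)
  have hcard : (S1 ∪ S2 ∪ S3 ∪ S4 ∪ S5).card
      = S1.card + S2.card + S3.card + S4.card + S5.card := by
    rw [Finset.card_union_of_disjoint, Finset.card_union_of_disjoint,
      Finset.card_union_of_disjoint, Finset.card_union_of_disjoint d12]
    · exact Finset.disjoint_union_left.mpr ⟨d13, d23⟩
    · exact Finset.disjoint_union_left.mpr ⟨Finset.disjoint_union_left.mpr ⟨d14, d24⟩, d34⟩
    · exact Finset.disjoint_union_left.mpr
        ⟨Finset.disjoint_union_left.mpr ⟨Finset.disjoint_union_left.mpr ⟨d15, d25⟩, d35⟩, d45⟩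
  have hle := Finset.card_le_card hsub
  rw [hcard, c1, c2, c3, c4, c5] at hle
  rw [PerimBound.perim_eq_card]
  omega
end
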